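/- arXiv:1402.1086 — 3 statements merged into one kernel-verified Lean document; each statement's English description precedes it below -/
import Mathlib

section
/- Let X be a Polish metric space and let a, b ∈ X. If a ≡_α b for every countable ordinal α < ω₁, then there exists a surjective isometry χ : X → X with χ(a) = b; consequently a ≡_α b for every ordinal α. -/
/-- The back-and-forth hierarchy `≡_α` on equal-length tuples of a metric space:
`≡₀` is "partial isometry", successor stages are the back-and-forth extension
condition, limit stages are intersections. -/
noncomputable def BF {X : Type} [MetricSpace X] (α : Ordinal) :
    ∀ n : ℕ, (Fin n → X) → (Fin n → X) → Prop :=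
  Ordinal.limitRecOn α
    (fun _ a b => ∀ i j, dist (a i) (a j) = dist (b i) (b j))
    (fun _ ih n a b =>
      (∀ x : X, ∃ y : X, ih (n + 1) (Fin.snoc a x) (Fin.snoc b y)) ∧
      (∀ y : X, ∃ x : X, ih (n + 1) (Fin.snoc a x) (Fin.snoc b y)))
    (fun _ _ ih n a b => ∀ β hβ, ih β hβ n a b)

section BFLemmas

variable {X : Type} [MetricSpace X]

theorem BF_zero : @BF X _ 0 = fun _ a b => ∀ i j, dist (a i) (a j) = dist (b i) (b j) := by
  unfold BF; exact Ordinal.limitRecOn_zero _ _ _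

theorem BF_succ (α : Ordinal) : @BF X _ (Order.succ α) = fun n a b =>
    (∀ x : X, ∃ y : X, BF α (n + 1) (Fin.snoc a x) (Fin.snoc b y)) ∧
    (∀ y : X, ∃ x : X, BF α (n + 1) (Fin.snoc a x) (Fin.snoc b y)) := by
  unfold BF; exact Ordinal.limitRecOn_succ _ _ _ _

theorem BF_limit {α : Ordinal} (hα : Order.IsSuccLimit α) : @BF X _ α = fun n a b =>
    ∀ β, β < α → BF β n a b := by
  unfold BF; exact Ordinal.limitRecOn_limit _ _ _ _ hα

theorem bf_reindex (α : Ordinal) : ∀ {n m : ℕ} (σ : Fin m → Fin n) (a b : Fin n → X),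
    BF α n a b → BF α m (a ∘ σ) (b ∘ σ) := by
  induction α using Ordinal.induction with
  | _ α IH =>
    rcases Ordinal.zero_or_succ_or_isSuccLimit α with h0 | ⟨β, rfl⟩ | hlim
    · subst h0
      intro n m σ a b hab
      rw [BF_zero] at *
      intro i j; exact hab (σ i) (σ j)
    · intro n m σ a b hab
      rw [BF_succ] at *
      obtain ⟨hf, hb⟩ := hab
      constructor
      · intro x
        obtain ⟨y, hy⟩ := hf x
        refine ⟨y, ?_⟩
        have := IH β (Order.lt_succ β) (Fin.lastCases (Fin.last n) (fun j => (σ j).castSucc))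
          (Fin.snoc a x) (Fin.snoc b y) hy
        convert this using 2 <;>
        · funext i
          refine Fin.lastCases ?_ (fun j => ?_) i <;>
            simp [Fin.snoc_castSucc, Fin.snoc_last]
      · intro y
        obtain ⟨x, hx⟩ := hb y
        refine ⟨x, ?_⟩
        have := IH β (Order.lt_succ β) (Fin.lastCases (Fin.last n) (fun j => (σ j).castSucc))
          (Fin.snoc a x) (Fin.snoc b y) hx
        convert this using 2 <;>
        · funext i
          refine Fin.lastCases ?_ (fun j => ?_) i <;>
            simp [Fin.snoc_castSucc, Fin.snoc_last]
    · intro n m σ a b hab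
      rw [BF_limit hlim] at *
      intro β hβ
      exact IH β hβ σ a b (hab β hβ)

theorem bf_drop {α : Ordinal} {n : ℕ} {a b : Fin n → X} {x y : X}
    (h : BF α (n + 1) (Fin.snoc a x) (Fin.snoc b y)) : BF α n a b := by
  have := bf_reindex α (Fin.castSucc : Fin n → Fin (n + 1)) _ _ h
  simpa [Function.comp_def, Fin.snoc_castSucc] using this

theorem bf_of_succ (x₀ : X) {α : Ordinal} {n : ℕ} {a b : Fin n → X}
    (h : BF (Order.succ α) n a b) : BF α n a b := by
  rw [BF_succ] at h
  obtain ⟨y, hy⟩ := h.1 x₀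
  exact bf_drop hy

theorem bf_mono (x₀ : X) : ∀ (β α : Ordinal), α ≤ β → ∀ {n : ℕ} {a b : Fin n → X},
    BF β n a b → BF α n a b := by
  intro β
  induction β using Ordinal.induction with
  | _ β IH =>
    intro α hαβ n a b hab
    rcases eq_or_lt_of_le hαβ with rfl | hlt
    · exact hab
    rcases Ordinal.zero_or_succ_or_isSuccLimit β with h0 | ⟨γ, rfl⟩ | hlim
    · subst h0; exact absurd hlt (not_lt_zero (a := α))
    · exact IH γ (Order.lt_succ γ) α (Order.lt_succ_iff.mp hlt) (bf_of_succ x₀ hab)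
    · rw [BF_limit hlim] at hab
      exact hab α hlt

theorem snoc_cons {n : ℕ} (a : X) (u : Fin n → X) (x : X) :
    (Fin.snoc (Fin.cons a u : Fin (n + 1) → X) x : Fin (n + 2) → X)
      = Fin.cons a (Fin.snoc u x) := by
  funext i
  refine Fin.lastCases ?_ (fun j => ?_) i
  · rw [Fin.snoc_last, ← Fin.succ_last, Fin.cons_succ, Fin.snoc_last]
  · rw [Fin.snoc_castSucc]
    refine Fin.cases ?_ (fun j' => ?_) j
    · rfl
    · rw [Fin.cons_succ, ← Fin.succ_castSucc, Fin.cons_succ, Fin.snoc_castSucc]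

theorem bf_of_isometry (χ : X ≃ᵢ X) : ∀ (α : Ordinal) (n : ℕ) (a : Fin n → X),
    BF α n a (χ ∘ a) := by
  intro α
  induction α using Ordinal.induction with
  | _ α IH =>
    rcases Ordinal.zero_or_succ_or_isSuccLimit α with h0 | ⟨β, rfl⟩ | hlim
    · subst h0; rw [BF_zero]
      intro n a i j
      exact (χ.isometry.dist_eq _ _).symm
    · intro n a
      rw [BF_succ]
      constructor
      · intro x
        refine ⟨χ x, ?_⟩
        have := IH β (Order.lt_succ β) (n + 1) (Fin.snoc a x)
        convert this using 2
        funext i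
        refine Fin.lastCases ?_ (fun j => ?_) i <;> simp [Fin.snoc_castSucc, Fin.snoc_last]
      · intro y
        refine ⟨χ.symm y, ?_⟩
        have := IH β (Order.lt_succ β) (n + 1) (Fin.snoc a (χ.symm y))
        convert this using 2
        funext i
        refine Fin.lastCases ?_ (fun j => ?_) i <;> simp [Fin.snoc_castSucc, Fin.snoc_last]
    · intro n a
      rw [BF_limit hlim]
      intro β hβ
      exact IH β hβ n a

end BFLemmas


section Assemble

open Filter Topology

variable {X : Type} [MetricSpace X] [CompleteSpace X]

theorem seq_of_dense {U : ℕ → X} (hU : DenseRange U) (z : X) :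
    ∃ w : ℕ → ℕ, Tendsto (fun k => U (w k)) atTop (𝓝 z) := by
  have h : ∀ k : ℕ, ∃ n, dist z (U n) < 1 / (k + 1) := by
    intro k
    exact Metric.denseRange_iff.mp hU z (1 / (k + 1)) (by positivity)
  choose w hw using h
  refine ⟨w, ?_⟩
  rw [tendsto_iff_dist_tendsto_zero]
  refine squeeze_zero (fun k => dist_nonneg) (fun k => ?_) tendsto_one_div_add_atTop_nhds_zero_nat
  rw [dist_comm]
  exact (hw k).le

theorem extend_half (U V : ℕ → X) (hd : ∀ i j, dist (U i) (U j) = dist (V i) (V j))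
    (hU : DenseRange U) :
    ∃ F : X → X, ∀ (z : X) (w : ℕ → ℕ), Tendsto (fun k => U (w k)) atTop (𝓝 z) →
      Tendsto (fun k => V (w k)) atTop (𝓝 (F z)) := by
  have happrox : ∀ (z : X) (k : ℕ), ∃ n, dist z (U n) < 1 / (k + 1) := by
    intro z k
    exact Metric.denseRange_iff.mp hU z (1 / (k + 1)) (by positivity)
  choose g hg using happrox
  have hUg : ∀ z : X, Tendsto (fun k => U (g z k)) atTop (𝓝 z) := by
    intro z
    rw [tendsto_iff_dist_tendsto_zero]
    refine squeeze_zero (fun k => dist_nonneg) (fun k => ?_)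
      tendsto_one_div_add_atTop_nhds_zero_nat
    rw [dist_comm]
    exact (hg z k).le
  have hcauchy : ∀ z : X, CauchySeq fun k => V (g z k) := by
    intro z
    rw [Metric.cauchySeq_iff]
    intro ε hε
    obtain ⟨N, hN⟩ := exists_nat_gt (2 / ε)
    refine ⟨N, fun m hm n hn => ?_⟩
    have h2 : dist (V (g z m)) (V (g z n)) = dist (U (g z m)) (U (g z n)) := (hd _ _).symm
    have h3 : dist (U (g z m)) (U (g z n)) ≤ dist z (U (g z m)) + dist z (U (g z n)) :=
      dist_triangle_left _ _ _
    have h4 : dist z (U (g z m)) < 1 / (N + 1) := by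
      refine lt_of_lt_of_le (hg z m) ?_
      apply one_div_le_one_div_of_le (by positivity)
      exact_mod_cast Nat.succ_le_succ hm
    have h5 : dist z (U (g z n)) < 1 / (N + 1) := by
      refine lt_of_lt_of_le (hg z n) ?_
      apply one_div_le_one_div_of_le (by positivity)
      exact_mod_cast Nat.succ_le_succ hn
    have h6 : (2 : ℝ) / (N + 1) < ε := by
      rw [div_lt_iff₀ (by positivity)]
      have hε' : 0 < ε := hε
      calc (2 : ℝ) = ε * (2 / ε) := by field_simp
      _ < ε * (N + 1) := by
          apply mul_lt_mul_of_pos_left _ hε'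
          have : (N : ℝ) < N + 1 := by linarith
          linarith
      _ = ε * (N + 1) := rfl
    calc dist (V (g z m)) (V (g z n)) = dist (U (g z m)) (U (g z n)) := h2
      _ ≤ dist z (U (g z m)) + dist z (U (g z n)) := h3
      _ < 1 / (N + 1) + 1 / (N + 1) := by linarith
      _ = 2 / (N + 1) := by ring
      _ < ε := h6
  have hlim : ∀ z : X, ∃ L, Tendsto (fun k => V (g z k)) atTop (𝓝 L) := by
    intro z
    exact cauchySeq_tendsto_of_complete (hcauchy z)
  choose F hF using hlim
  refine ⟨F, fun z w hw => ?_⟩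
  have key : Tendsto (fun k => dist (V (w k)) (V (g z k))) atTop (𝓝 0) := by
    have : ∀ k, dist (V (w k)) (V (g z k)) = dist (U (w k)) (U (g z k)) := fun k => (hd _ _).symm
    simp_rw [this]
    have h1 : Tendsto (fun k => dist (U (w k)) (U (g z k))) atTop (𝓝 (dist z z)) :=
      Tendsto.dist hw (hUg z)
    simpa using h1
  have : Tendsto (fun k => dist (V (w k)) (F z)) atTop (𝓝 0) := by
    refine squeeze_zero (g := fun k => dist (V (w k)) (V (g z k)) + dist (V (g z k)) (F z))
      (fun k => dist_nonneg) (fun k => dist_triangle _ _ _) ?_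
    have := key.add ((tendsto_iff_dist_tendsto_zero.mp (hF z)))
    simpa using this
  exact tendsto_iff_dist_tendsto_zero.mpr this

theorem assemble (U V : ℕ → X) (hd : ∀ i j, dist (U i) (U j) = dist (V i) (V j))
    (hU : DenseRange U) (hV : DenseRange V) :
    ∃ χ : X ≃ᵢ X, ∀ i, χ (U i) = V i := by
  obtain ⟨F, hF⟩ := extend_half U V hd hU
  obtain ⟨G, hG⟩ := extend_half V U (fun i j => (hd i j).symm) hV
  have hFU : ∀ i, F (U i) = V i := by
    intro i
    have := hF (U i) (fun _ => i) tendsto_const_nhds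
    exact (tendsto_nhds_unique tendsto_const_nhds this).symm
  have hGF : ∀ z, G (F z) = z := by
    intro z
    obtain ⟨w, hw⟩ := seq_of_dense hU z
    have h1 := hF z w hw
    have h2 := hG (F z) w h1
    exact tendsto_nhds_unique h2 hw
  have hFG : ∀ z, F (G z) = z := by
    intro z
    obtain ⟨w, hw⟩ := seq_of_dense hV z
    have h1 := hG z w hw
    have h2 := hF (G z) w h1
    exact tendsto_nhds_unique h2 hw
  have hiso : ∀ z z', dist (F z) (F z') = dist z z' := by
    intro z z'
    obtain ⟨w, hw⟩ := seq_of_dense hU z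
    obtain ⟨w', hw'⟩ := seq_of_dense hU z'
    have h1 := hF z w hw
    have h2 := hF z' w' hw'
    have h3 : Tendsto (fun k => dist (V (w k)) (V (w' k))) atTop (𝓝 (dist (F z) (F z'))) :=
      Tendsto.dist h1 h2
    have h4 : Tendsto (fun k => dist (U (w k)) (U (w' k))) atTop (𝓝 (dist z z')) :=
      Tendsto.dist hw hw'
    have h5 : (fun k => dist (V (w k)) (V (w' k))) = fun k => dist (U (w k)) (U (w' k)) := by
      funext k; exact (hd _ _).symm
    rw [h5] at h3
    exact tendsto_nhds_unique h3 h4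
  refine ⟨⟨⟨F, G, hGF, hFG⟩, ?_⟩, hFU⟩
  exact Isometry.of_dist_eq hiso

end Assemble

section Cond

open Cardinal Ordinal

universe u

noncomputable def eps (k : ℕ) : ℝ := (1 / 2 : ℝ) ^ k

theorem eps_pos (k : ℕ) : 0 < eps k := by unfold eps; positivity

theorem eps_mono {m n : ℕ} (h : m ≤ n) : eps n ≤ eps m := by
  unfold eps
  exact pow_le_pow_of_le_one (by norm_num) (by norm_num) h

theorem eps_small (ε : ℝ) (hε : 0 < ε) : ∃ N, eps N < ε := by
  obtain ⟨N, hN⟩ := exists_pow_lt_of_lt_one hε (by norm_num : (1 / 2 : ℝ) < 1)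
  exact ⟨N, hN⟩

variable {X : Type} [MetricSpace X]

/-- Countable index type of conditions. -/
def CondIdx : Type := (Σ n : ℕ, (Fin n → ℕ) × (Fin n → ℕ)) × ℕ

instance : Countable CondIdx := by
  unfold CondIdx; infer_instance

/-- `α`-approximate realizability of a condition. -/
def GdI (a b : X) (u : ℕ → X) (α : Ordinal.{u}) (p : CondIdx) : Prop :=
  ∃ ub cb : Fin p.1.1 → X,
    BF α (p.1.1 + 1) (Fin.cons a ub) (Fin.cons b cb) ∧
    (∀ i, dist (ub i) (u (p.1.2.1 i)) < eps p.2) ∧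
    (∀ i, dist (cb i) (u (p.1.2.2 i)) < eps p.2)

def Gd (a b : X) (u : ℕ → X) (α : Ordinal.{u}) (n : ℕ) (xs ys : ℕ → ℕ) (k : ℕ) : Prop :=
  GdI a b u α ⟨⟨n, fun i => xs i.1, fun i => ys i.1⟩, k⟩

theorem GdI_mono (a b : X) (u : ℕ → X) {α β : Ordinal.{u}} (hαβ : α ≤ β) (p : CondIdx)
    (h : GdI a b u β p) : GdI a b u α p := by
  obtain ⟨ub, cb, hbf, hx, hy⟩ := h
  exact ⟨ub, cb, bf_mono a β α hαβ hbf, hx, hy⟩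

theorem exists_stab (a b : X) (u : ℕ → X) :
    ∃ α₀ : Ordinal.{u}, α₀ < (Cardinal.aleph.{u} 1).ord ∧
      ∀ (p : CondIdx) (α : Ordinal.{u}), α < (Cardinal.aleph.{u} 1).ord →
        GdI a b u α₀ p → GdI a b u α p := by
  classical
  set W1 := (Cardinal.aleph.{u} 1).ord with hW1
  have hreg : (Cardinal.aleph.{u} 1).IsRegular := Cardinal.isRegular_aleph_one
  set S := {p : CondIdx // ∃ α, α < W1 ∧ ¬ GdI a b u α p} with hS
  have hd : ∀ s : S, ∃ α, α < W1 ∧ ¬ GdI a b u α s.1 := fun s => s.2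
  choose d hd1 hd2 using hd
  have hcard : Cardinal.lift.{u} #S < (Cardinal.aleph.{u} 1) := by
    have h1 : Cardinal.lift.{u} #S ≤ Cardinal.lift.{u} ℵ₀ :=
      Cardinal.lift_le.mpr Cardinal.mk_le_aleph0
    rw [Cardinal.lift_aleph0] at h1
    exact lt_of_le_of_lt h1 Cardinal.aleph0_lt_aleph_one
  have hsup : (⨆ s : S, d s) < W1 :=
    Cardinal.iSup_lt_ord_lift_of_isRegular (f := fun s : S => d s) hreg hcard hd1
  refine ⟨⨆ s : S, d s, hsup, ?_⟩
  intro p α hα hp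
  by_cases hdead : ∃ β, β < W1 ∧ ¬ GdI a b u β p
  · exfalso
    have hle : d ⟨p, hdead⟩ ≤ ⨆ s : S, d s :=
      le_ciSup (Ordinal.bddAbove_range _) (⟨p, hdead⟩ : S)
    exact hd2 ⟨p, hdead⟩ (GdI_mono a b u hle p hp)
  · push_neg at hdead
    exact hdead α hα

theorem step_main (a b : X) (u : ℕ → X) (hu : DenseRange u) (α₀ : Ordinal.{u})
    (hW : Order.succ α₀ < (Cardinal.aleph.{u} 1).ord)
    (hstab : ∀ (n : ℕ) (xs ys : ℕ → ℕ) (k : ℕ) (α : Ordinal.{u}),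
      α < (Cardinal.aleph.{u} 1).ord → Gd a b u α₀ n xs ys k → Gd a b u α n xs ys k)
    (m t : ℕ) (side : Bool) (xs ys : ℕ → ℕ) (hg : Gd a b u α₀ m xs ys m) :
    ∃ xs' ys' : ℕ → ℕ, Gd a b u α₀ (m + 1) xs' ys' (m + 1) ∧
      (∀ i, i < m → dist (u (xs' i)) (u (xs i)) ≤ eps m + eps (m + 1) ∧
                    dist (u (ys' i)) (u (ys i)) ≤ eps m + eps (m + 1)) ∧
      (side = true → xs' m = t) ∧ (side = false → ys' m = t) := by
  classical
  have hsucc : Gd a b u (Order.succ α₀) m xs ys m := hstab m xs ys m _ hW hg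
  obtain ⟨ub, cb, hbf, hx, hy⟩ := hsucc
  rw [BF_succ] at hbf
  have hax : ∀ i : Fin m, ∃ mm, dist (ub i) (u mm) < eps (m + 1) := fun i =>
    Metric.denseRange_iff.mp hu (ub i) _ (eps_pos (m + 1))
  have hay : ∀ i : Fin m, ∃ mm, dist (cb i) (u mm) < eps (m + 1) := fun i =>
    Metric.denseRange_iff.mp hu (cb i) _ (eps_pos (m + 1))
  choose labx hlabx using hax
  choose laby hlaby using hay
  cases side with
  | true =>
    obtain ⟨ystar, hystar⟩ := hbf.1 (u t)
    rw [snoc_cons, snoc_cons] at hystar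
    obtain ⟨ly, hly⟩ := Metric.denseRange_iff.mp hu ystar _ (eps_pos (m + 1))
    refine ⟨fun j => if h : j < m then labx ⟨j, h⟩ else t,
            fun j => if h : j < m then laby ⟨j, h⟩ else ly, ?_, ?_, fun _ => by simp, by simp⟩
    · refine ⟨Fin.snoc ub (u t), Fin.snoc cb ystar, hystar, ?_, ?_⟩
      · intro i
        refine Fin.lastCases ?_ (fun j => ?_) i
        · rw [Fin.snoc_last]
          simp only [Fin.val_last, dif_neg (Nat.lt_irrefl m)]
          simpa using eps_pos (m + 1)
        · rw [Fin.snoc_castSucc]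
          simp only [Fin.coe_castSucc, dif_pos j.isLt, Fin.eta]
          exact hlabx j
      · intro i
        refine Fin.lastCases ?_ (fun j => ?_) i
        · rw [Fin.snoc_last]
          simp only [Fin.val_last, dif_neg (Nat.lt_irrefl m)]
          exact hly
        · rw [Fin.snoc_castSucc]
          simp only [Fin.coe_castSucc, dif_pos j.isLt, Fin.eta]
          exact hlaby j
    · intro i hi
      simp only [dif_pos hi]
      constructor
      · calc dist (u (labx ⟨i, hi⟩)) (u (xs i))
            ≤ dist (u (labx ⟨i, hi⟩)) (ub ⟨i, hi⟩) + dist (ub ⟨i, hi⟩) (u (xs i)) :=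
              dist_triangle _ _ _
          _ ≤ eps m + eps (m + 1) := by
              have h1 : dist (u (labx ⟨i, hi⟩)) (ub ⟨i, hi⟩) ≤ eps (m + 1) := by
                rw [dist_comm]; exact (hlabx _).le
              have h2 : dist (ub ⟨i, hi⟩) (u (xs i)) ≤ eps m := (hx ⟨i, hi⟩).le
              linarith
      · calc dist (u (laby ⟨i, hi⟩)) (u (ys i))
            ≤ dist (u (laby ⟨i, hi⟩)) (cb ⟨i, hi⟩) + dist (cb ⟨i, hi⟩) (u (ys i)) :=
              dist_triangle _ _ _
          _ ≤ eps m + eps (m + 1) := by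
              have h1 : dist (u (laby ⟨i, hi⟩)) (cb ⟨i, hi⟩) ≤ eps (m + 1) := by
                rw [dist_comm]; exact (hlaby _).le
              have h2 : dist (cb ⟨i, hi⟩) (u (ys i)) ≤ eps m := (hy ⟨i, hi⟩).le
              linarith
  | false =>
    obtain ⟨xstar, hxstar⟩ := hbf.2 (u t)
    rw [snoc_cons, snoc_cons] at hxstar
    obtain ⟨lx, hlx⟩ := Metric.denseRange_iff.mp hu xstar _ (eps_pos (m + 1))
    refine ⟨fun j => if h : j < m then labx ⟨j, h⟩ else lx,
            fun j => if h : j < m then laby ⟨j, h⟩ else t, ?_, ?_, by simp, fun _ => by simp⟩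
    · refine ⟨Fin.snoc ub xstar, Fin.snoc cb (u t), hxstar, ?_, ?_⟩
      · intro i
        refine Fin.lastCases ?_ (fun j => ?_) i
        · rw [Fin.snoc_last]
          simp only [Fin.val_last, dif_neg (Nat.lt_irrefl m)]
          exact hlx
        · rw [Fin.snoc_castSucc]
          simp only [Fin.coe_castSucc, dif_pos j.isLt, Fin.eta]
          exact hlabx j
      · intro i
        refine Fin.lastCases ?_ (fun j => ?_) i
        · rw [Fin.snoc_last]
          simp only [Fin.val_last, dif_neg (Nat.lt_irrefl m)]
          simpa using eps_pos (m + 1)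
        · rw [Fin.snoc_castSucc]
          simp only [Fin.coe_castSucc, dif_pos j.isLt, Fin.eta]
          exact hlaby j
    · intro i hi
      simp only [dif_pos hi]
      constructor
      · calc dist (u (labx ⟨i, hi⟩)) (u (xs i))
            ≤ dist (u (labx ⟨i, hi⟩)) (ub ⟨i, hi⟩) + dist (ub ⟨i, hi⟩) (u (xs i)) :=
              dist_triangle _ _ _
          _ ≤ eps m + eps (m + 1) := by
              have h1 : dist (u (labx ⟨i, hi⟩)) (ub ⟨i, hi⟩) ≤ eps (m + 1) := by
                rw [dist_comm]; exact (hlabx _).le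
              have h2 : dist (ub ⟨i, hi⟩) (u (xs i)) ≤ eps m := (hx ⟨i, hi⟩).le
              linarith
      · calc dist (u (laby ⟨i, hi⟩)) (u (ys i))
            ≤ dist (u (laby ⟨i, hi⟩)) (cb ⟨i, hi⟩) + dist (cb ⟨i, hi⟩) (u (ys i)) :=
              dist_triangle _ _ _
          _ ≤ eps m + eps (m + 1) := by
              have h1 : dist (u (laby ⟨i, hi⟩)) (cb ⟨i, hi⟩) ≤ eps (m + 1) := by
                rw [dist_comm]; exact (hlaby _).le
              have h2 : dist (cb ⟨i, hi⟩) (u (ys i)) ≤ eps m := (hy ⟨i, hi⟩).le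
              linarith


/-- challenge schedule -/
def tOf (m : ℕ) : ℕ := (Nat.unpair (m / 2)).1

def sideOf (m : ℕ) : Bool := decide (m % 2 = 0)

theorem sched_hits (t : ℕ) (side : Bool) (M : ℕ) :
    ∃ m, M ≤ m ∧ tOf m = t ∧ sideOf m = side := by
  cases side with
  | true =>
    refine ⟨2 * Nat.pair t M, ?_, ?_, ?_⟩
    · have := Nat.right_le_pair t M; omega
    · unfold tOf
      rw [Nat.mul_div_cancel_left _ (by norm_num)]
      simp [Nat.unpair_pair]
    · unfold sideOf; simp [Nat.mul_mod_right]
  | false =>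
    refine ⟨2 * Nat.pair t M + 1, ?_, ?_, ?_⟩
    · have := Nat.right_le_pair t M; omega
    · unfold tOf
      have : (2 * Nat.pair t M + 1) / 2 = Nat.pair t M := by omega
      rw [this]
      simp [Nat.unpair_pair]
    · unfold sideOf
      have : (2 * Nat.pair t M + 1) % 2 = 1 := by omega
      simp [this]

/-- All the data needed for the recursive construction. -/
structure Setup (X : Type) [MetricSpace X] : Type (u + 1) where
  a : X
  b : X
  uu : ℕ → X
  hu : DenseRange uu
  α₀ : Ordinal.{u}
  hW : Order.succ α₀ < (Cardinal.aleph.{u} 1).ord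
  hstab : ∀ (n : ℕ) (xs ys : ℕ → ℕ) (k : ℕ) (α : Ordinal.{u}),
      α < (Cardinal.aleph.{u} 1).ord → Gd a b uu α₀ n xs ys k → Gd a b uu α n xs ys k
  hbase : Gd a b uu α₀ 0 (fun _ => 0) (fun _ => 0) 0

variable (S : Setup.{u} X)

noncomputable def St : ∀ m : ℕ, {q : (ℕ → ℕ) × (ℕ → ℕ) // Gd S.a S.b S.uu S.α₀ m q.1 q.2 m} :=
  fun m => Nat.rec
    (motive := fun m => {q : (ℕ → ℕ) × (ℕ → ℕ) // Gd S.a S.b S.uu S.α₀ m q.1 q.2 m})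
    ⟨⟨fun _ => 0, fun _ => 0⟩, S.hbase⟩
    (fun m prev =>
      ⟨⟨(step_main S.a S.b S.uu S.hu S.α₀ S.hW S.hstab m (tOf m) (sideOf m)
          prev.1.1 prev.1.2 prev.2).choose,
        (step_main S.a S.b S.uu S.hu S.α₀ S.hW S.hstab m (tOf m) (sideOf m)
          prev.1.1 prev.1.2 prev.2).choose_spec.choose⟩,
       (step_main S.a S.b S.uu S.hu S.α₀ S.hW S.hstab m (tOf m) (sideOf m)
          prev.1.1 prev.1.2 prev.2).choose_spec.choose_spec.1⟩)
    m

theorem St_spec (m : ℕ) :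
    (∀ i, i < m →
      dist (S.uu ((St S (m + 1)).1.1 i)) (S.uu ((St S m).1.1 i)) ≤ eps m + eps (m + 1) ∧
      dist (S.uu ((St S (m + 1)).1.2 i)) (S.uu ((St S m).1.2 i)) ≤ eps m + eps (m + 1)) ∧
    (sideOf m = true → (St S (m + 1)).1.1 m = tOf m) ∧
    (sideOf m = false → (St S (m + 1)).1.2 m = tOf m) :=
  (step_main S.a S.b S.uu S.hu S.α₀ S.hW S.hstab m (tOf m) (sideOf m)
      (St S m).1.1 (St S m).1.2 (St S m).2).choose_spec.choose_spec.2

variable [CompleteSpace X]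

/-- The track of the `i`-th left coordinate, starting from stage `i+1`. -/
noncomputable def xseq (i : ℕ) : ℕ → X := fun j => S.uu ((St S (i + 1 + j)).1.1 i)

noncomputable def yseq (i : ℕ) : ℕ → X := fun j => S.uu ((St S (i + 1 + j)).1.2 i)

theorem xseq_consec (i j : ℕ) :
    dist (xseq S i j) (xseq S i (j + 1)) ≤ (2 * eps (i + 1)) * (1 / 2) ^ j := by
  have h := ((St_spec S (i + 1 + j)).1 i (by omega)).1
  have heq : dist (xseq S i j) (xseq S i (j + 1)) =
      dist (S.uu ((St S (i + 1 + j + 1)).1.1 i)) (S.uu ((St S (i + 1 + j)).1.1 i)) := by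
    rw [dist_comm]; rfl
  rw [heq]
  refine le_trans h ?_
  have h1 : eps (i + 1 + j + 1) ≤ eps (i + 1 + j) := eps_mono (by omega)
  have h2 : eps (i + 1 + j) + eps (i + 1 + j) = 2 * eps (i + 1) * (1 / 2) ^ j := by
    unfold eps
    rw [show i + 1 + j = (i + 1) + j from rfl, pow_add]
    ring
  linarith

theorem yseq_consec (i j : ℕ) :
    dist (yseq S i j) (yseq S i (j + 1)) ≤ (2 * eps (i + 1)) * (1 / 2) ^ j := by
  have h := ((St_spec S (i + 1 + j)).1 i (by omega)).2
  have heq : dist (yseq S i j) (yseq S i (j + 1)) =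
      dist (S.uu ((St S (i + 1 + j + 1)).1.2 i)) (S.uu ((St S (i + 1 + j)).1.2 i)) := by
    rw [dist_comm]; rfl
  rw [heq]
  refine le_trans h ?_
  have h1 : eps (i + 1 + j + 1) ≤ eps (i + 1 + j) := eps_mono (by omega)
  have h2 : eps (i + 1 + j) + eps (i + 1 + j) = 2 * eps (i + 1) * (1 / 2) ^ j := by
    unfold eps
    rw [show i + 1 + j = (i + 1) + j from rfl, pow_add]
    ring
  linarith

noncomputable def Ux (i : ℕ) : X :=
  (cauchySeq_tendsto_of_complete
    (cauchySeq_of_le_geometric (1 / 2) (2 * eps (i + 1)) (by norm_num) (xseq_consec S i))).choose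

noncomputable def Uy (i : ℕ) : X :=
  (cauchySeq_tendsto_of_complete
    (cauchySeq_of_le_geometric (1 / 2) (2 * eps (i + 1)) (by norm_num) (yseq_consec S i))).choose

theorem Ux_tendsto (i : ℕ) : Filter.Tendsto (xseq S i) Filter.atTop (nhds (Ux S i)) :=
  (cauchySeq_tendsto_of_complete
    (cauchySeq_of_le_geometric (1 / 2) (2 * eps (i + 1)) (by norm_num) (xseq_consec S i))).choose_spec

theorem Uy_tendsto (i : ℕ) : Filter.Tendsto (yseq S i) Filter.atTop (nhds (Uy S i)) :=
  (cauchySeq_tendsto_of_complete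
    (cauchySeq_of_le_geometric (1 / 2) (2 * eps (i + 1)) (by norm_num) (yseq_consec S i))).choose_spec

theorem Ux_close (i m : ℕ) (him : i < m) :
    dist (S.uu ((St S m).1.1 i)) (Ux S i) ≤ 4 * eps m := by
  have hj : i + 1 + (m - (i + 1)) = m := by omega
  have hb := dist_le_of_le_geometric_of_tendsto (1 / 2) (2 * eps (i + 1)) (by norm_num)
    (xseq_consec S i) (Ux_tendsto S i) (m - (i + 1))
  have heq : xseq S i (m - (i + 1)) = S.uu ((St S m).1.1 i) := by
    unfold xseq; rw [hj]
  rw [heq] at hb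
  have hm : eps m = eps (i + 1) * (1 / 2) ^ (m - (i + 1)) := by
    unfold eps; rw [← pow_add]; congr 1; omega
  rw [hm]
  refine le_trans hb (le_of_eq ?_)
  ring

theorem Uy_close (i m : ℕ) (him : i < m) :
    dist (S.uu ((St S m).1.2 i)) (Uy S i) ≤ 4 * eps m := by
  have hj : i + 1 + (m - (i + 1)) = m := by omega
  have hb := dist_le_of_le_geometric_of_tendsto (1 / 2) (2 * eps (i + 1)) (by norm_num)
    (yseq_consec S i) (Uy_tendsto S i) (m - (i + 1))
  have heq : yseq S i (m - (i + 1)) = S.uu ((St S m).1.2 i) := by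
    unfold yseq; rw [hj]
  rw [heq] at hb
  have hm : eps m = eps (i + 1) * (1 / 2) ^ (m - (i + 1)) := by
    unfold eps; rw [← pow_add]; congr 1; omega
  rw [hm]
  refine le_trans hb (le_of_eq ?_)
  ring

theorem eps_tendsto : Filter.Tendsto (fun m => eps m) Filter.atTop (nhds 0) := by
  unfold eps
  exact tendsto_pow_atTop_nhds_zero_of_lt_one (by norm_num) (by norm_num)

theorem trkx_tendsto (i : ℕ) :
    Filter.Tendsto (fun m => S.uu ((St S m).1.1 i)) Filter.atTop (nhds (Ux S i)) := by
  rw [Metric.tendsto_atTop]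
  intro ε hε
  obtain ⟨N, hN⟩ := eps_small (ε / 4) (by linarith)
  refine ⟨max (i + 1) N, fun m hm => ?_⟩
  have h1 : dist (S.uu ((St S m).1.1 i)) (Ux S i) ≤ 4 * eps m :=
    Ux_close S i m (lt_of_lt_of_le (Nat.lt_succ_self i) (le_trans (le_max_left _ _) hm))
  have h2 : eps m ≤ eps N := eps_mono (le_trans (le_max_right _ _) hm)
  calc dist (S.uu ((St S m).1.1 i)) (Ux S i) ≤ 4 * eps m := h1
    _ ≤ 4 * eps N := by linarith
    _ < ε := by linarith

theorem trky_tendsto (i : ℕ) :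
    Filter.Tendsto (fun m => S.uu ((St S m).1.2 i)) Filter.atTop (nhds (Uy S i)) := by
  rw [Metric.tendsto_atTop]
  intro ε hε
  obtain ⟨N, hN⟩ := eps_small (ε / 4) (by linarith)
  refine ⟨max (i + 1) N, fun m hm => ?_⟩
  have h1 : dist (S.uu ((St S m).1.2 i)) (Uy S i) ≤ 4 * eps m :=
    Uy_close S i m (lt_of_lt_of_le (Nat.lt_succ_self i) (le_trans (le_max_left _ _) hm))
  have h2 : eps m ≤ eps N := eps_mono (le_trans (le_max_right _ _) hm)
  calc dist (S.uu ((St S m).1.2 i)) (Uy S i) ≤ 4 * eps m := h1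
    _ ≤ 4 * eps N := by linarith
    _ < ε := by linarith

theorem stage_dist (m i j : ℕ) (hi : i < m) (hj : j < m) :
    |dist (S.uu ((St S m).1.1 i)) (S.uu ((St S m).1.1 j)) -
      dist (S.uu ((St S m).1.2 i)) (S.uu ((St S m).1.2 j))| ≤ 4 * eps m := by
  obtain ⟨ub, cb, hbf, hx, hy⟩ := (St S m).2
  have h0 : BF 0 (m + 1) (Fin.cons S.a ub) (Fin.cons S.b cb) :=
    bf_mono S.a S.α₀ 0 (zero_le (a := S.α₀)) hbf
  rw [BF_zero] at h0
  have hEq : dist (ub ⟨i, hi⟩) (ub ⟨j, hj⟩) = dist (cb ⟨i, hi⟩) (cb ⟨j, hj⟩) := by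
    have := h0 (Fin.succ ⟨i, hi⟩) (Fin.succ ⟨j, hj⟩)
    simpa only [Fin.cons_succ] using this
  set A := dist (S.uu ((St S m).1.1 i)) (S.uu ((St S m).1.1 j)) with hA
  set B := dist (S.uu ((St S m).1.2 i)) (S.uu ((St S m).1.2 j)) with hB
  set A' := dist (ub ⟨i, hi⟩) (ub ⟨j, hj⟩) with hA'
  set B' := dist (cb ⟨i, hi⟩) (cb ⟨j, hj⟩) with hB'
  have t1 : |A - A'| ≤ dist (S.uu ((St S m).1.1 i)) (ub ⟨i, hi⟩) +
      dist (S.uu ((St S m).1.1 j)) (ub ⟨j, hj⟩) := by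
    rw [← Real.dist_eq]
    exact dist_dist_dist_le _ _ _ _
  have t2 : |B' - B| ≤ dist (cb ⟨i, hi⟩) (S.uu ((St S m).1.2 i)) +
      dist (cb ⟨j, hj⟩) (S.uu ((St S m).1.2 j)) := by
    rw [← Real.dist_eq]
    exact dist_dist_dist_le _ _ _ _
  have e1 : dist (S.uu ((St S m).1.1 i)) (ub ⟨i, hi⟩) ≤ eps m := by
    rw [dist_comm]; exact (hx ⟨i, hi⟩).le
  have e2 : dist (S.uu ((St S m).1.1 j)) (ub ⟨j, hj⟩) ≤ eps m := by
    rw [dist_comm]; exact (hx ⟨j, hj⟩).le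
  have e3 : dist (cb ⟨i, hi⟩) (S.uu ((St S m).1.2 i)) ≤ eps m := (hy ⟨i, hi⟩).le
  have e4 : dist (cb ⟨j, hj⟩) (S.uu ((St S m).1.2 j)) ≤ eps m := (hy ⟨j, hj⟩).le
  have key : A - B = (A - A') + (B' - B) := by rw [hEq]; ring
  calc |A - B| = |(A - A') + (B' - B)| := by rw [key]
    _ ≤ |A - A'| + |B' - B| := abs_add_le _ _
    _ ≤ 4 * eps m := by linarith

theorem stage_dist0 (m i : ℕ) (hi : i < m) :
    |dist S.a (S.uu ((St S m).1.1 i)) - dist S.b (S.uu ((St S m).1.2 i))| ≤ 2 * eps m := by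
  obtain ⟨ub, cb, hbf, hx, hy⟩ := (St S m).2
  have h0 : BF 0 (m + 1) (Fin.cons S.a ub) (Fin.cons S.b cb) :=
    bf_mono S.a S.α₀ 0 (zero_le (a := S.α₀)) hbf
  rw [BF_zero] at h0
  have hEq : dist S.a (ub ⟨i, hi⟩) = dist S.b (cb ⟨i, hi⟩) := by
    have := h0 0 (Fin.succ ⟨i, hi⟩)
    simpa only [Fin.cons_succ, Fin.cons_zero] using this
  set A := dist S.a (S.uu ((St S m).1.1 i)) with hA
  set B := dist S.b (S.uu ((St S m).1.2 i)) with hB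
  set A' := dist S.a (ub ⟨i, hi⟩) with hA'
  set B' := dist S.b (cb ⟨i, hi⟩) with hB'
  have t1 : |A - A'| ≤ dist S.a S.a + dist (S.uu ((St S m).1.1 i)) (ub ⟨i, hi⟩) := by
    rw [← Real.dist_eq]
    exact dist_dist_dist_le _ _ _ _
  have t2 : |B' - B| ≤ dist S.b S.b + dist (cb ⟨i, hi⟩) (S.uu ((St S m).1.2 i)) := by
    rw [← Real.dist_eq]
    exact dist_dist_dist_le _ _ _ _
  have e1 : dist (S.uu ((St S m).1.1 i)) (ub ⟨i, hi⟩) ≤ eps m := by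
    rw [dist_comm]; exact (hx ⟨i, hi⟩).le
  have e3 : dist (cb ⟨i, hi⟩) (S.uu ((St S m).1.2 i)) ≤ eps m := (hy ⟨i, hi⟩).le
  have key : A - B = (A - A') + (B' - B) := by rw [hEq]; ring
  have hda : dist S.a S.a = 0 := dist_self _
  have hdb : dist S.b S.b = 0 := dist_self _
  calc |A - B| = |(A - A') + (B' - B)| := by rw [key]
    _ ≤ |A - A'| + |B' - B| := abs_add_le _ _
    _ ≤ 2 * eps m := by linarith

theorem dist_Ux_Uy (i j : ℕ) : dist (Ux S i) (Ux S j) = dist (Uy S i) (Uy S j) := by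
  have hs : Filter.Tendsto (fun m => dist (S.uu ((St S m).1.1 i)) (S.uu ((St S m).1.1 j)))
      Filter.atTop (nhds (dist (Ux S i) (Ux S j))) :=
    (trkx_tendsto S i).dist (trkx_tendsto S j)
  have ht : Filter.Tendsto (fun m => dist (S.uu ((St S m).1.2 i)) (S.uu ((St S m).1.2 j)))
      Filter.atTop (nhds (dist (Uy S i) (Uy S j))) :=
    (trky_tendsto S i).dist (trky_tendsto S j)
  have hdiff : Filter.Tendsto (fun m =>
      dist (S.uu ((St S m).1.1 i)) (S.uu ((St S m).1.1 j)) -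
      dist (S.uu ((St S m).1.2 i)) (S.uu ((St S m).1.2 j))) Filter.atTop (nhds 0) := by
    refine squeeze_zero_norm' (a := fun m => 4 * eps m) ?_ ?_
    · filter_upwards [Filter.eventually_ge_atTop (max i j + 1)] with m hm
      exact stage_dist S m i j (by omega) (by omega)
    · have := eps_tendsto.const_mul (4 : ℝ)
      simpa using this
  have := hs.sub hdiff
  simp only [sub_sub_cancel, _root_.sub_zero] at this
  exact tendsto_nhds_unique this ht

theorem dist_a_Ux (i : ℕ) : dist S.a (Ux S i) = dist S.b (Uy S i) := by
  have hs : Filter.Tendsto (fun m => dist S.a (S.uu ((St S m).1.1 i)))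
      Filter.atTop (nhds (dist S.a (Ux S i))) :=
    tendsto_const_nhds.dist (trkx_tendsto S i)
  have ht : Filter.Tendsto (fun m => dist S.b (S.uu ((St S m).1.2 i)))
      Filter.atTop (nhds (dist S.b (Uy S i))) :=
    tendsto_const_nhds.dist (trky_tendsto S i)
  have hdiff : Filter.Tendsto (fun m =>
      dist S.a (S.uu ((St S m).1.1 i)) - dist S.b (S.uu ((St S m).1.2 i)))
      Filter.atTop (nhds 0) := by
    refine squeeze_zero_norm' (a := fun m => 2 * eps m) ?_ ?_
    · filter_upwards [Filter.eventually_ge_atTop (i + 1)] with m hm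
      exact stage_dist0 S m i (by omega)
    · have := eps_tendsto.const_mul (2 : ℝ)
      simpa using this
  have := hs.sub hdiff
  simp only [sub_sub_cancel, _root_.sub_zero] at this
  exact tendsto_nhds_unique this ht

noncomputable def Uf : ℕ → X := fun i => Nat.casesOn i S.a (fun i => Ux S i)

noncomputable def Vf : ℕ → X := fun i => Nat.casesOn i S.b (fun i => Uy S i)

theorem Uf_dense : DenseRange (Uf S) := by
  rw [Metric.denseRange_iff]
  intro z r hr
  obtain ⟨t, ht⟩ := Metric.denseRange_iff.mp S.hu z (r / 2) (by linarith)
  obtain ⟨N, hN⟩ := eps_small (r / 8) (by linarith)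
  obtain ⟨m, hmN, hmt, hms⟩ := sched_hits t true N
  have hchal : (St S (m + 1)).1.1 m = t := by
    have := (St_spec S m).2.1 hms; rwa [hmt] at this
  have hcl : dist (S.uu ((St S (m + 1)).1.1 m)) (Ux S m) ≤ 4 * eps (m + 1) :=
    Ux_close S m (m + 1) (Nat.lt_succ_self m)
  rw [hchal] at hcl
  have h2 : eps (m + 1) ≤ eps N := eps_mono (by omega)
  refine ⟨m + 1, ?_⟩
  have : Uf S (m + 1) = Ux S m := rfl
  rw [this]
  calc dist z (Ux S m) ≤ dist z (S.uu t) + dist (S.uu t) (Ux S m) := dist_triangle _ _ _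
    _ < r / 2 + 4 * eps (m + 1) := by linarith
    _ ≤ r / 2 + 4 * eps N := by linarith
    _ < r := by linarith

theorem Vf_dense : DenseRange (Vf S) := by
  rw [Metric.denseRange_iff]
  intro z r hr
  obtain ⟨t, ht⟩ := Metric.denseRange_iff.mp S.hu z (r / 2) (by linarith)
  obtain ⟨N, hN⟩ := eps_small (r / 8) (by linarith)
  obtain ⟨m, hmN, hmt, hms⟩ := sched_hits t false N
  have hchal : (St S (m + 1)).1.2 m = t := by
    have := (St_spec S m).2.2 hms; rwa [hmt] at this
  have hcl : dist (S.uu ((St S (m + 1)).1.2 m)) (Uy S m) ≤ 4 * eps (m + 1) :=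
    Uy_close S m (m + 1) (Nat.lt_succ_self m)
  rw [hchal] at hcl
  have h2 : eps (m + 1) ≤ eps N := eps_mono (by omega)
  refine ⟨m + 1, ?_⟩
  have : Vf S (m + 1) = Uy S m := rfl
  rw [this]
  calc dist z (Uy S m) ≤ dist z (S.uu t) + dist (S.uu t) (Uy S m) := dist_triangle _ _ _
    _ < r / 2 + 4 * eps (m + 1) := by linarith
    _ ≤ r / 2 + 4 * eps N := by linarith
    _ < r := by linarith

theorem Uf_Vf_dist (i j : ℕ) : dist (Uf S i) (Uf S j) = dist (Vf S i) (Vf S j) := by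
  cases i with
  | zero =>
    cases j with
    | zero => simp [Uf, Vf]
    | succ j => exact dist_a_Ux S j
  | succ i =>
    cases j with
    | zero =>
      have := dist_a_Ux S i
      calc dist (Uf S (i + 1)) (Uf S 0) = dist S.a (Ux S i) := dist_comm _ _
        _ = dist S.b (Uy S i) := dist_a_Ux S i
        _ = dist (Vf S (i + 1)) (Vf S 0) := dist_comm _ _
    | succ j => exact dist_Ux_Uy S i j

end Cond




/-- Let `X` be a Polish metric space and `a, b ∈ X`. If `a ≡_α b` for every countable
ordinal `α < ω₁`, then there is a surjective isometry `χ : X → X` with `χ(a) = b`;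
consequently `a ≡_α b` for every ordinal `α`. -/
theorem isometry_of_BF_countable {X : Type} [MetricSpace X] [CompleteSpace X]
    [TopologicalSpace.SeparableSpace X] (a b : X)
    (h : ∀ α : Ordinal, α < (Cardinal.aleph 1).ord → BF α 1 ![a] ![b]) :
    (∃ χ : X ≃ᵢ X, χ a = b) ∧ ∀ α : Ordinal, BF α 1 ![a] ![b] := by
  classical
  have hne : Nonempty X := ⟨a⟩
  obtain ⟨uu, huu⟩ := TopologicalSpace.exists_dense_seq X
  obtain ⟨α₀, hα₀, hstabI⟩ := exists_stab a b uu
  have hlimω : Order.IsSuccLimit ((Cardinal.aleph 1).ord) :=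
    Cardinal.isSuccLimit_ord (Cardinal.aleph0_le_aleph 1)
  have hW : Order.succ α₀ < (Cardinal.aleph 1).ord := hlimω.succ_lt hα₀
  have hstab : ∀ (n : ℕ) (xs ys : ℕ → ℕ) (k : ℕ) (α : Ordinal),
      α < (Cardinal.aleph 1).ord → Gd a b uu α₀ n xs ys k → Gd a b uu α n xs ys k :=
    fun n xs ys k α hα hg => hstabI _ α hα hg
  have hbase : Gd a b uu α₀ 0 (fun _ => 0) (fun _ => 0) 0 := by
    refine ⟨fun i => i.elim0, fun i => i.elim0, ?_, fun i => i.elim0, fun i => i.elim0⟩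
    have hb := h α₀ hα₀
    have e1 : (Fin.cons a (fun i : Fin 0 => i.elim0) : Fin 1 → X) = ![a] := by
      funext i
      refine Fin.cases ?_ (fun j => j.elim0) i
      rfl
    have e2 : (Fin.cons b (fun i : Fin 0 => i.elim0) : Fin 1 → X) = ![b] := by
      funext i
      refine Fin.cases ?_ (fun j => j.elim0) i
      rfl
    show BF α₀ 1 (Fin.cons a (fun i : Fin 0 => i.elim0)) (Fin.cons b (fun i : Fin 0 => i.elim0))
    rw [e1, e2]
    exact hb
  let S : Setup X := ⟨a, b, uu, huu, α₀, hW, hstab, hbase⟩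
  obtain ⟨χ, hχ⟩ := assemble (Uf S) (Vf S) (Uf_Vf_dist S) (Uf_dense S) (Vf_dense S)
  have hab : χ a = b := hχ 0
  have hBF : ∀ α : Ordinal, BF α 1 ![a] ![b] := by
    intro α
    have hb := bf_of_isometry χ α 1 ![a]
    have e3 : (⇑χ ∘ ![a] : Fin 1 → X) = ![b] := by
      funext i
      have hi : i = 0 := Subsingleton.elim _ _
      subst hi
      show χ (![a] 0) = ![b] 0
      rw [Matrix.cons_val_zero, Matrix.cons_val_zero]
      exact hab
    rwa [e3] at hb
  exact ⟨⟨χ, hab⟩, hBF⟩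
end

section
/- Let X be a Polish metric space and ā, b̄ tuples of the same finite length n. If ā ≡_α b̄ for every countable ordinal α, then there exists a surjective isometry of X mapping ā onto b̄. -/
namespace BFproof

variable {X : Type} [MetricSpace X]

theorem BF_zero_iff (n : ℕ) (a b : Fin n → X) :
    BF 0 n a b ↔ ∀ i j, dist (a i) (a j) = dist (b i) (b j) := by
  unfold BF; rw [Ordinal.limitRecOn_zero]

theorem BF_succ_iff (α : Ordinal) (n : ℕ) (a b : Fin n → X) :
    BF (Order.succ α) n a b ↔
      (∀ x : X, ∃ y : X, BF α (n + 1) (Fin.snoc a x) (Fin.snoc b y)) ∧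
      (∀ y : X, ∃ x : X, BF α (n + 1) (Fin.snoc a x) (Fin.snoc b y)) := by
  unfold BF; rw [Ordinal.limitRecOn_succ]

theorem BF_limit_iff {o : Ordinal} (ho : Order.IsSuccLimit o) (n : ℕ) (a b : Fin n → X) :
    BF o n a b ↔ ∀ β < o, BF β n a b := by
  unfold BF; rw [Ordinal.limitRecOn_limit _ _ _ _ ho]

theorem BF_succ_step (α : Ordinal) : ∀ (n : ℕ) (a b : Fin n → X),
    BF (Order.succ α) n a b → BF α n a b := by
  induction α using Ordinal.limitRecOn with
  | zero =>
    intro n a b hab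
    rw [BF_zero_iff]
    rcases isEmpty_or_nonempty X with hX | hX
    · intro i; exact (IsEmpty.false (a i)).elim
    · obtain ⟨y, hy⟩ := ((BF_succ_iff _ _ _ _).1 hab).1 (Classical.arbitrary X)
      rw [BF_zero_iff] at hy
      intro i j
      have := hy i.castSucc j.castSucc
      simpa [Fin.snoc_castSucc] using this
  | add_one α ih =>
    rw [Ordinal.add_one_eq_succ]
    intro n a b hab
    rw [BF_succ_iff] at hab ⊢
    refine ⟨fun x => ?_, fun y => ?_⟩
    · obtain ⟨y, hy⟩ := hab.1 x; exact ⟨y, ih _ _ _ hy⟩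
    · obtain ⟨x, hx⟩ := hab.2 y; exact ⟨x, ih _ _ _ hx⟩
  | limit o ho ih =>
    intro n a b hab
    rw [BF_limit_iff ho]
    intro β hβ
    apply ih β hβ
    rw [BF_succ_iff] at hab ⊢
    refine ⟨fun x => ?_, fun y => ?_⟩
    · obtain ⟨y, hy⟩ := hab.1 x
      exact ⟨y, (BF_limit_iff ho _ _ _).1 hy β hβ⟩
    · obtain ⟨x, hx⟩ := hab.2 y
      exact ⟨x, (BF_limit_iff ho _ _ _).1 hx β hβ⟩

theorem BF_mono : ∀ (α : Ordinal) {β : Ordinal}, β ≤ α → ∀ (n : ℕ) (a b : Fin n → X),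
    BF α n a b → BF β n a b := by
  intro α
  induction α using Ordinal.induction with
  | h α ih =>
    intro β hβ n a b hab
    rcases eq_or_lt_of_le hβ with rfl | hlt
    · exact hab
    rcases Ordinal.zero_or_succ_or_isSuccLimit α with rfl | ⟨α₀, rfl⟩ | hlim
    · exact absurd hlt (not_lt_zero (a := β))
    · exact ih α₀ (Order.lt_succ α₀) (Order.lt_succ_iff.1 hlt) n a b
        (BF_succ_step α₀ n a b hab)
    · exact (BF_limit_iff hlim n a b).1 hab β hlt

theorem BF_symm : ∀ (α : Ordinal) (n : ℕ) (a b : Fin n → X),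
    BF α n a b → BF α n b a := by
  intro α
  induction α using Ordinal.limitRecOn with
  | zero =>
    intro n a b hab
    rw [BF_zero_iff] at hab ⊢
    intro i j; exact (hab i j).symm
  | add_one α ih =>
    rw [Ordinal.add_one_eq_succ]
    intro n a b hab
    rw [BF_succ_iff] at hab ⊢
    refine ⟨fun x => ?_, fun y => ?_⟩
    · obtain ⟨y, hy⟩ := hab.2 x; exact ⟨y, ih _ _ _ hy⟩
    · obtain ⟨x, hx⟩ := hab.1 y; exact ⟨x, ih _ _ _ hx⟩
  | limit o ho ih =>
    intro n a b hab
    rw [BF_limit_iff ho] at hab ⊢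
    intro β hβ; exact ih β hβ _ _ _ (hab β hβ)

theorem BF_dist {α : Ordinal} {n : ℕ} {a b : Fin n → X} (h : BF α n a b) :
    ∀ i j, dist (a i) (a j) = dist (b i) (b j) :=
  (BF_zero_iff n a b).1 (BF_mono α (zero_le (a := α)) n a b h)



universe uu

/-- The first uncountable ordinal. -/
noncomputable def Theta : Ordinal.{uu} := (Cardinal.aleph 1).ord

theorem Theta_isLimit : Order.IsSuccLimit Theta :=
  Cardinal.isSuccLimit_ord (Cardinal.aleph0_le_aleph 1)

theorem Theta_pos : 0 < Theta := Theta_isLimit.pos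

/-- A set of countable ordinals, unbounded below ω₁. -/
def Unb (A : Set Ordinal.{uu}) : Prop :=
  A ⊆ Set.Iio Theta ∧ ∀ γ < Theta, ∃ δ ∈ A, γ ≤ δ

theorem unb_Iio : Unb (Set.Iio Theta) :=
  ⟨le_refl _, fun γ hγ => ⟨γ, hγ, le_refl _⟩⟩

theorem Unb.nonempty {A : Set Ordinal} (hA : Unb A) : ∃ γ, γ ∈ A := by
  obtain ⟨δ, hδ, -⟩ := hA.2 0 Theta_pos
  exact ⟨δ, hδ⟩

/-- Pigeonhole: an unbounded subset of ω₁ partitioned into countably many pieces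
has an unbounded piece. -/
theorem unb_pigeon {A : Set Ordinal} (hA : Unb A) (π : Ordinal → ℕ) :
    ∃ m : ℕ, Unb {γ ∈ A | π γ = m} := by
  by_contra hcon
  push_neg at hcon
  have hsub : ∀ m : ℕ, {γ ∈ A | π γ = m} ⊆ Set.Iio Theta :=
    fun m γ hγ => hA.1 hγ.1
  have hbd : ∀ m : ℕ, ∃ ζ, ζ < Theta ∧ ∀ δ ∈ {γ ∈ A | π γ = m}, δ < ζ := by
    intro m
    have := hcon m
    rw [Unb] at this
    push_neg at this
    obtain ⟨ζ, hζ, h2⟩ := this (hsub m)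
    exact ⟨ζ, hζ, h2⟩
  choose f hf1 hf2 using hbd
  have hsup : (⨆ m, f m) < Theta := by
    rw [show Theta = (Cardinal.aleph 1).ord from rfl]
    apply Cardinal.iSup_lt_ord_lift_of_isRegular Cardinal.isRegular_aleph_one
    · rw [Cardinal.mk_nat, Cardinal.lift_aleph0]; exact Cardinal.aleph0_lt_aleph_one
    · exact hf1
  obtain ⟨δ, hδA, hδge⟩ := hA.2 _ hsup
  have : δ < f (π δ) := hf2 (π δ) δ ⟨hδA, rfl⟩
  exact absurd (this.trans_le (le_ciSup (Ordinal.bddAbove_range _) (π δ))) (not_lt.2 hδge)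

/-- Refine an unbounded set so that finitely many ordinal-indexed families of points
each have diameter at most ε on it. -/
theorem refine_list {X : Type} [MetricSpace X] {u : ℕ → X} (hu : DenseRange u)
    (L : List (Ordinal → X)) {ε : ℝ} (hε : 0 < ε) :
    ∀ (A : Set Ordinal), Unb A →
    ∃ A' : Set Ordinal, Unb A' ∧ A' ⊆ A ∧
      ∀ g ∈ L, ∀ γ ∈ A', ∀ γ' ∈ A', dist (g γ) (g γ') ≤ ε := by
  induction L with
  | nil => intro A hA; exact ⟨A, hA, le_refl _, by simp⟩
  | cons g L ih =>
    intro A hA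
    have hx : ∀ p : X, ∃ m, dist p (u m) < ε / 2 :=
      fun p => Metric.denseRange_iff.1 hu p (ε / 2) (by linarith)
    choose π hπ using fun γ => hx (g γ)
    obtain ⟨m, hm⟩ := unb_pigeon hA π
    obtain ⟨A', hA', hsub, hL⟩ := ih _ hm
    refine ⟨A', hA', fun γ hγ => (hsub hγ).1, ?_⟩
    intro g' hg' γ hγ γ' hγ'
    rcases List.mem_cons.1 hg' with rfl | hg'
    · have h1 := hπ γ
      have h2 := hπ γ'
      have e1 : π γ = m := (hsub hγ).2
      have e2 : π γ' = m := (hsub hγ').2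
      rw [e1] at h1; rw [e2] at h2
      calc dist (g' γ) (g' γ') ≤ dist (g' γ) (u m) + dist (u m) (g' γ') := dist_triangle _ _ _
        _ ≤ ε / 2 + ε / 2 := by
            rw [dist_comm (u m)]; exact add_le_add h1.le h2.le
        _ = ε := by ring
    · exact hL g' hg' γ hγ γ' hγ'


end BFproof

namespace BFproof
variable {X : Type} [MetricSpace X]

theorem step_raw {u : ℕ → X} (hu : DenseRange u) (m : ℕ)
    (A : Set Ordinal) (c d : Ordinal → Fin m → X) (x : X) {ε : ℝ} (hε : 0 < ε)
    (hA : Unb A) (hbf : ∀ γ ∈ A, BF γ m (c γ) (d γ)) :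
    ∃ (A' : Set Ordinal) (β : Ordinal → Ordinal) (w : Ordinal → X),
      Unb A' ∧ A' ⊆ A ∧ (∀ γ ∈ A', β γ ∈ A) ∧
      (∀ γ ∈ A', BF γ (m + 1) (Fin.snoc (c (β γ)) x) (Fin.snoc (d (β γ)) (w γ))) ∧
      (∀ γ ∈ A', ∀ γ' ∈ A',
        (∀ j, dist (c (β γ) j) (c (β γ') j) ≤ ε ∧ dist (d (β γ) j) (d (β γ') j) ≤ ε)
        ∧ dist (w γ) (w γ') ≤ ε) := by
  have hch : ∀ γ : Ordinal, ∃ (δ : Ordinal) (y : X), γ ∈ A →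
      (δ ∈ A ∧ BF γ (m + 1) (Fin.snoc (c δ) x) (Fin.snoc (d δ) y)) := by
    intro γ
    by_cases hγ : γ ∈ A
    · have hγΘ : γ < Theta := hA.1 hγ
      have hsucc : Order.succ γ < Theta := Theta_isLimit.succ_lt hγΘ
      obtain ⟨δ, hδA, hle⟩ := hA.2 _ hsucc
      have hBF : BF (Order.succ γ) m (c δ) (d δ) := BF_mono δ hle m _ _ (hbf δ hδA)
      obtain ⟨y, hy⟩ := ((BF_succ_iff γ m _ _).1 hBF).1 x
      exact ⟨δ, y, fun _ => ⟨hδA, hy⟩⟩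
    · exact ⟨γ, x, fun hc => absurd hc hγ⟩
  choose β w hβw using hch
  obtain ⟨A', hA', hsub, hL⟩ := refine_list hu
    ((fun γ => w γ) :: (List.ofFn (fun j : Fin m => fun γ => c (β γ) j)
      ++ List.ofFn (fun j : Fin m => fun γ => d (β γ) j))) hε A hA
  refine ⟨A', β, w, hA', hsub, fun γ hγ => (hβw γ (hsub hγ)).1,
    fun γ hγ => (hβw γ (hsub hγ)).2, ?_⟩
  intro γ hγ γ' hγ'
  refine ⟨fun j => ⟨?_, ?_⟩, ?_⟩
  · exact hL _ (List.mem_cons_of_mem _ (List.mem_append_left _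
      (List.mem_ofFn.2 ⟨j, rfl⟩))) γ hγ γ' hγ'
  · exact hL _ (List.mem_cons_of_mem _ (List.mem_append_right _
      (List.mem_ofFn.2 ⟨j, rfl⟩))) γ hγ γ' hγ'
  · exact hL _ List.mem_cons_self γ hγ γ' hγ'

end BFproof

namespace BFproof
variable {X : Type} [MetricSpace X]

structure St (n : ℕ) (a b : Fin n → X) (u : ℕ → X) (k : ℕ) where
  A : Set Ordinal.{uu}
  c : Ordinal → Fin (n + k) → X
  d : Ordinal → Fin (n + k) → X
  unb : Unb A
  bf : ∀ γ ∈ A, BF γ (n + k) (c γ) (d γ)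
  prox : ∀ γ ∈ A, ∀ γ' ∈ A, ∀ j, dist (c γ j) (c γ' j) ≤ (1/2 : ℝ)^k ∧
    dist (d γ j) (d γ' j) ≤ (1/2 : ℝ)^k
  fixa : ∀ γ ∈ A, ∀ i : Fin n, c γ (Fin.castLE (Nat.le_add_right n k) i) = a i ∧
    d γ (Fin.castLE (Nat.le_add_right n k) i) = b i
  fixc : ∀ γ ∈ A, ∀ j : ℕ, (hj : j < k) → j % 2 = 0 →
    c γ ⟨n + j, by omega⟩ = u (j / 2)
  fixd : ∀ γ ∈ A, ∀ j : ℕ, (hj : j < k) → j % 2 = 1 →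
    d γ ⟨n + j, by omega⟩ = u (j / 2)

def Link {n : ℕ} {a b : Fin n → X} {u : ℕ → X} {k : ℕ}
    (s : St.{uu} n a b u k) (t : St.{uu} n a b u (k + 1)) : Prop :=
  ∀ γ ∈ t.A, ∃ β ∈ s.A, ∀ j : Fin (n + k),
    t.c γ (Fin.castSucc j) = s.c β j ∧ t.d γ (Fin.castSucc j) = s.d β j

theorem step_st {n : ℕ} {a b : Fin n → X} {u : ℕ → X} (hu : DenseRange u)
    (k : ℕ) (s : St.{uu} n a b u k) : ∃ t : St.{uu} n a b u (k + 1), Link s t := by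
  have hε : (0:ℝ) < (1/2 : ℝ)^(k+1) := by positivity
  have hcastLE : ∀ i : Fin n, (Fin.castLE (Nat.le_add_right n (k+1)) i : Fin (n+(k+1)))
      = Fin.castSucc (Fin.castLE (Nat.le_add_right n k) i) := fun i => rfl
  have hmk : ∀ (j : ℕ) (h2 : n + j < n + (k+1)) (h3 : n + j < n + k),
      (⟨n + j, h2⟩ : Fin (n + (k+1))) = Fin.castSucc (⟨n + j, h3⟩ : Fin (n + k)) :=
    fun j h2 h3 => rfl
  have hlastmk : ∀ (h2 : n + k < n + (k+1)),
      (⟨n + k, h2⟩ : Fin (n + (k+1))) = Fin.last (n + k) := fun h2 => rfl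
  rcases Nat.even_or_odd k with hk | hk
  · -- even: insert u (k/2) on the left
    have hkm : k % 2 = 0 := Nat.even_iff.1 hk
    obtain ⟨A', β, w, hA', hsub, hβ, hbf', hprox'⟩ :=
      step_raw hu (n + k) s.A s.c s.d (u (k / 2)) hε s.unb s.bf
    refine ⟨⟨A', fun γ => Fin.snoc (s.c (β γ)) (u (k / 2)),
      fun γ => Fin.snoc (s.d (β γ)) (w γ), hA', fun γ hγ => hbf' γ hγ, ?_, ?_, ?_, ?_⟩, ?_⟩
    · intro γ hγ γ' hγ' j
      cases j using Fin.lastCases with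
      | last =>
        simp only [Fin.snoc_last]
        exact ⟨by simp, (hprox' γ hγ γ' hγ').2⟩
      | cast j =>
        simp only [Fin.snoc_castSucc]
        exact ⟨((hprox' γ hγ γ' hγ').1 j).1, ((hprox' γ hγ γ' hγ').1 j).2⟩
    · intro γ hγ i
      rw [hcastLE i]
      simp only [Fin.snoc_castSucc]
      exact s.fixa (β γ) (hβ γ hγ) i
    · intro γ hγ j hj hpar
      rcases Nat.lt_or_ge j k with h1 | h1
      · rw [hmk j (by omega) (by omega)]
        simp only [Fin.snoc_castSucc]
        exact s.fixc (β γ) (hβ γ hγ) j h1 hpar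
      · have hjk : j = k := by omega
        subst hjk
        rw [hlastmk (by omega)]
        exact Fin.snoc_last (α := fun _ => X) _ _
    · intro γ hγ j hj hpar
      rcases Nat.lt_or_ge j k with h1 | h1
      · rw [hmk j (by omega) (by omega)]
        simp only [Fin.snoc_castSucc]
        exact s.fixd (β γ) (hβ γ hγ) j h1 hpar
      · exfalso; omega
    · intro γ hγ
      refine ⟨β γ, hβ γ hγ, fun j => ?_⟩
      constructor <;> simp [Fin.snoc_castSucc]
  · -- odd: insert u (k/2) on the right
    have hkm : k % 2 = 1 := Nat.odd_iff.1 hk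
    obtain ⟨A', β, w, hA', hsub, hβ, hbf', hprox'⟩ :=
      step_raw hu (n + k) s.A s.d s.c (u (k / 2)) hε s.unb
        (fun γ hγ => BF_symm γ _ _ _ (s.bf γ hγ))
    refine ⟨⟨A', fun γ => Fin.snoc (s.c (β γ)) (w γ),
      fun γ => Fin.snoc (s.d (β γ)) (u (k / 2)), hA',
      fun γ hγ => BF_symm γ _ _ _ (hbf' γ hγ), ?_, ?_, ?_, ?_⟩, ?_⟩
    · intro γ hγ γ' hγ' j
      cases j using Fin.lastCases with
      | last =>
        simp only [Fin.snoc_last]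
        exact ⟨(hprox' γ hγ γ' hγ').2, by simp⟩
      | cast j =>
        simp only [Fin.snoc_castSucc]
        exact ⟨((hprox' γ hγ γ' hγ').1 j).2, ((hprox' γ hγ γ' hγ').1 j).1⟩
    · intro γ hγ i
      rw [hcastLE i]
      simp only [Fin.snoc_castSucc]
      exact s.fixa (β γ) (hβ γ hγ) i
    · intro γ hγ j hj hpar
      rcases Nat.lt_or_ge j k with h1 | h1
      · rw [hmk j (by omega) (by omega)]
        simp only [Fin.snoc_castSucc]
        exact s.fixc (β γ) (hβ γ hγ) j h1 hpar
      · exfalso; omega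
    · intro γ hγ j hj hpar
      rcases Nat.lt_or_ge j k with h1 | h1
      · rw [hmk j (by omega) (by omega)]
        simp only [Fin.snoc_castSucc]
        exact s.fixd (β γ) (hβ γ hγ) j h1 hpar
      · have hjk : j = k := by omega
        subst hjk
        rw [hlastmk (by omega)]
        exact Fin.snoc_last (α := fun _ => X) _ _
    · intro γ hγ
      refine ⟨β γ, hβ γ hγ, fun j => ?_⟩
      constructor <;> simp [Fin.snoc_castSucc]

end BFproof

namespace BFproof
variable {X : Type} [MetricSpace X]

noncomputable def baseSt {n : ℕ} (a b : Fin n → X) (u : ℕ → X)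
    (h : ∀ α : Ordinal.{uu}, α < Theta.{uu} → BF α n a b) : St.{uu} n a b u 0 where
  A := Set.Iio Theta
  c := fun _ => a
  d := fun _ => b
  unb := unb_Iio
  bf := fun γ hγ => h γ hγ
  prox := fun γ _ γ' _ j => by simp
  fixa := fun γ _ i => ⟨rfl, rfl⟩
  fixc := fun γ _ j hj => by omega
  fixd := fun γ _ j hj => by omega

noncomputable def chain {n : ℕ} {a b : Fin n → X} {u : ℕ → X} (hu : DenseRange u)
    (s0 : St.{uu} n a b u 0) : ∀ k : ℕ, St.{uu} n a b u k
  | 0 => s0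
  | (k + 1) => (step_st hu k (chain hu s0 k)).choose

theorem chain_link {n : ℕ} {a b : Fin n → X} {u : ℕ → X} (hu : DenseRange u)
    (s0 : St.{uu} n a b u 0) (k : ℕ) : Link (chain hu s0 k) (chain hu s0 (k + 1)) :=
  (step_st hu k (chain hu s0 k)).choose_spec

/-- From a distance-preserving correspondence between two countable dense families,
build a surjective isometry. -/
theorem completion [CompleteSpace X] (p q : ℕ → X)
    (hpq : ∀ i j, dist (p i) (p j) = dist (q i) (q j))
    (hp : DenseRange p) (hq : DenseRange q) :
    ∃ χ : X ≃ᵢ X, ∀ i, χ (p i) = q i := by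
  have half : ∀ (p q : ℕ → X), (∀ i j, dist (p i) (p j) = dist (q i) (q j)) →
      DenseRange p → ∃ f : X → X, (∀ x y, dist (f x) (f y) = dist x y) ∧
        ∀ i, f (p i) = q i := by
    intro p q hpq hp
    have hgeo : ∀ m : ℕ, (0:ℝ) < (1/2)^m := fun m => by positivity
    choose s hs using fun (x : X) (m : ℕ) => Metric.denseRange_iff.1 hp x ((1/2:ℝ)^m) (hgeo m)
    have htend0 : Filter.Tendsto (fun m : ℕ => ((1:ℝ)/2)^m) Filter.atTop (nhds 0) := by
      apply tendsto_pow_atTop_nhds_zero_of_lt_one <;> norm_num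
    have hpt : ∀ x, Filter.Tendsto (fun m => p (s x m)) Filter.atTop (nhds x) := by
      intro x
      rw [tendsto_iff_dist_tendsto_zero]
      exact squeeze_zero (fun m => dist_nonneg)
        (fun m => by rw [dist_comm]; exact (hs x m).le) htend0
    have hcauchy : ∀ x, CauchySeq (fun m => q (s x m)) := by
      intro x
      apply cauchySeq_of_le_geometric (1/2 : ℝ) 3 (by norm_num)
      intro m
      rw [← hpq]
      calc dist (p (s x m)) (p (s x (m+1)))
          ≤ dist (p (s x m)) x + dist x (p (s x (m+1))) := dist_triangle _ _ _
        _ ≤ (1/2)^m + (1/2)^(m+1) := by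
            rw [dist_comm (p (s x m)) x]
            exact add_le_add (hs x m).le (hs x (m+1)).le
        _ ≤ 3 * (1/2)^m := by rw [pow_succ]; nlinarith [hgeo m]
    choose f hf using fun x => cauchySeq_tendsto_of_complete (hcauchy x)
    refine ⟨f, fun x y => ?_, fun i => ?_⟩
    · have h1 : Filter.Tendsto (fun m => dist (q (s x m)) (q (s y m)))
          Filter.atTop (nhds (dist (f x) (f y))) := (hf x).dist (hf y)
      have h2 : Filter.Tendsto (fun m => dist (q (s x m)) (q (s y m)))
          Filter.atTop (nhds (dist x y)) := by
        have : (fun m => dist (q (s x m)) (q (s y m)))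
            = fun m => dist (p (s x m)) (p (s y m)) := by
          funext m; rw [hpq]
        rw [this]
        exact (hpt x).dist (hpt y)
      exact tendsto_nhds_unique h1 h2
    · have h2 : Filter.Tendsto (fun m => q (s (p i) m)) Filter.atTop (nhds (q i)) := by
        rw [tendsto_iff_dist_tendsto_zero]
        apply squeeze_zero (fun m => dist_nonneg) (fun m => ?_) htend0
        rw [← hpq, dist_comm]
        exact (hs (p i) m).le
      exact tendsto_nhds_unique (hf (p i)) h2
  obtain ⟨f, hfd, hfp⟩ := half p q hpq hp
  obtain ⟨g, hgd, hgq⟩ := half q p (fun i j => (hpq i j).symm) hq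
  have hfi : Isometry f := Isometry.of_dist_eq hfd
  have hgi : Isometry g := Isometry.of_dist_eq hgd
  have hgf : g ∘ f = id := by
    apply hp.equalizer (hgi.continuous.comp hfi.continuous) continuous_id
    funext i
    simp [hfp i, hgq i]
  have hfg : f ∘ g = id := by
    apply hq.equalizer (hfi.continuous.comp hgi.continuous) continuous_id
    funext i
    simp [hgq i, hfp i]
  refine ⟨⟨⟨f, g, fun x => congrFun hgf x, fun x => congrFun hfg x⟩, hfi⟩, fun i => hfp i⟩

end BFproof


open BFproof in
/-- Let `X` be a Polish metric space and `ā, b̄` tuples of the same finite length `n`.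
If `ā ≡_α b̄` for every countable ordinal `α`, then there is a surjective isometry of
`X` mapping `ā` onto `b̄`. -/
theorem isometry_of_BF_countable_tuples {X : Type} [MetricSpace X] [CompleteSpace X]
    [TopologicalSpace.SeparableSpace X] {n : ℕ} (a b : Fin n → X)
    (h : ∀ α : Ordinal, α < (Cardinal.aleph 1).ord → BF α n a b) :
    ∃ χ : X ≃ᵢ X, ∀ i, χ (a i) = b i := by
  rcases isEmpty_or_nonempty X with hX | hX
  · exact ⟨IsometryEquiv.refl X, fun i => (IsEmpty.false (a i)).elim⟩
  obtain ⟨u, hu⟩ := TopologicalSpace.exists_dense_seq X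
  have h' : ∀ α : Ordinal, α < Theta → BF α n a b := fun α hα => h α hα
  set s0 := baseSt a b u h' with hs0
  set C := chain hu s0 with hC
  -- pick representatives
  have hsel : ∀ k, ∃ γ, γ ∈ (C k).A := fun k => (C k).unb.nonempty
  choose γsel hγsel using hsel
  -- coordinate value sequences
  set vc : ℕ → ℕ → X := fun k ℓ =>
    if hℓ : ℓ < n + k then (C k).c (γsel k) ⟨ℓ, hℓ⟩ else u 0 with hvc
  set vd : ℕ → ℕ → X := fun k ℓ =>
    if hℓ : ℓ < n + k then (C k).d (γsel k) ⟨ℓ, hℓ⟩ else u 0 with hvd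
  have hvc_eq : ∀ (k ℓ) (hℓ : ℓ < n + k), vc k ℓ = (C k).c (γsel k) ⟨ℓ, hℓ⟩ :=
    fun k ℓ hℓ => dif_pos hℓ
  have hvd_eq : ∀ (k ℓ) (hℓ : ℓ < n + k), vd k ℓ = (C k).d (γsel k) ⟨ℓ, hℓ⟩ :=
    fun k ℓ hℓ => dif_pos hℓ
  -- one-step estimate
  have hstep : ∀ (k ℓ), ℓ < n + k → dist (vc (k+1) ℓ) (vc k ℓ) ≤ (1/2:ℝ)^k ∧
      dist (vd (k+1) ℓ) (vd k ℓ) ≤ (1/2:ℝ)^k := by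
    intro k ℓ hℓ
    obtain ⟨β, hβ, hco⟩ := chain_link hu s0 k (γsel (k+1)) (hγsel (k+1))
    have hℓ' : ℓ < n + (k+1) := by omega
    have hfin : (⟨ℓ, hℓ'⟩ : Fin (n + (k+1))) = Fin.castSucc ⟨ℓ, hℓ⟩ := rfl
    have hc1 : vc (k+1) ℓ = (C k).c β ⟨ℓ, hℓ⟩ := by
      rw [hvc_eq (k+1) ℓ hℓ', hfin]
      exact (hco ⟨ℓ, hℓ⟩).1
    have hd1 : vd (k+1) ℓ = (C k).d β ⟨ℓ, hℓ⟩ := by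
      rw [hvd_eq (k+1) ℓ hℓ', hfin]
      exact (hco ⟨ℓ, hℓ⟩).2
    have hprox := (C k).prox β hβ (γsel k) (hγsel k) ⟨ℓ, hℓ⟩
    rw [hc1, hd1, hvc_eq k ℓ hℓ, hvd_eq k ℓ hℓ]
    exact hprox
  -- limits of coordinates
  have hhalf : ∀ m : ℕ, (0:ℝ) < (1/2)^m := fun m => by positivity
  have hcauchy : ∀ ℓ : ℕ, CauchySeq (fun m => vc (m + (ℓ+1)) ℓ) ∧
      CauchySeq (fun m => vd (m + (ℓ+1)) ℓ) := by
    intro ℓ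
    constructor <;>
    · apply cauchySeq_of_le_geometric (1/2 : ℝ) 1 (by norm_num)
      intro m
      have hlt : ℓ < n + (m + (ℓ+1)) := by omega
      have hb := hstep (m + (ℓ+1)) ℓ hlt
      have hpow : ((1:ℝ)/2)^(m + (ℓ+1)) ≤ (1/2)^m :=
        pow_le_pow_of_le_one (by norm_num) (by norm_num) (by omega)
      rw [one_mul]
      first
      | calc dist (vc (m + (ℓ+1)) ℓ) (vc ((m+1) + (ℓ+1)) ℓ)
            = dist (vc ((m + (ℓ+1)) + 1) ℓ) (vc (m + (ℓ+1)) ℓ) := by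
              rw [dist_comm]; congr 2; omega
          _ ≤ (1/2:ℝ)^(m + (ℓ+1)) := hb.1
          _ ≤ _ := hpow
      | calc dist (vd (m + (ℓ+1)) ℓ) (vd ((m+1) + (ℓ+1)) ℓ)
            = dist (vd ((m + (ℓ+1)) + 1) ℓ) (vd (m + (ℓ+1)) ℓ) := by
              rw [dist_comm]; congr 2; omega
          _ ≤ (1/2:ℝ)^(m + (ℓ+1)) := hb.2
          _ ≤ _ := hpow
  choose P hP using fun ℓ => cauchySeq_tendsto_of_complete (hcauchy ℓ).1
  choose Q hQ using fun ℓ => cauchySeq_tendsto_of_complete (hcauchy ℓ).2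
  have hPfull : ∀ ℓ, Filter.Tendsto (fun k => vc k ℓ) Filter.atTop (nhds (P ℓ)) :=
    fun ℓ => (Filter.tendsto_add_atTop_iff_nat (ℓ+1)).1 (hP ℓ)
  have hQfull : ∀ ℓ, Filter.Tendsto (fun k => vd k ℓ) Filter.atTop (nhds (Q ℓ)) :=
    fun ℓ => (Filter.tendsto_add_atTop_iff_nat (ℓ+1)).1 (hQ ℓ)
  -- distances are preserved in the limit
  have hdists : ∀ ℓ ℓ', dist (P ℓ) (P ℓ') = dist (Q ℓ) (Q ℓ') := by
    intro ℓ ℓ'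
    have hev : (fun k => dist (vc k ℓ) (vc k ℓ')) =ᶠ[Filter.atTop]
        (fun k => dist (vd k ℓ) (vd k ℓ')) := by
      rw [Filter.eventuallyEq_iff_exists_mem]
      refine ⟨Set.Ici (max (ℓ+1) (ℓ'+1)), Filter.Ici_mem_atTop _, fun k hk => ?_⟩
      have h1 : ℓ < n + k := by
        have := le_max_left (ℓ+1) (ℓ'+1); have hk' := hk; simp only [Set.mem_Ici] at hk'; omega
      have h2 : ℓ' < n + k := by
        have := le_max_right (ℓ+1) (ℓ'+1); have hk' := hk; simp only [Set.mem_Ici] at hk'; omega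
      show dist (vc k ℓ) (vc k ℓ') = dist (vd k ℓ) (vd k ℓ')
      rw [hvc_eq k ℓ h1, hvc_eq k ℓ' h2, hvd_eq k ℓ h1, hvd_eq k ℓ' h2]
      exact BF_dist ((C k).bf (γsel k) (hγsel k)) _ _
    have t1 : Filter.Tendsto (fun k => dist (vc k ℓ) (vc k ℓ')) Filter.atTop
        (nhds (dist (P ℓ) (P ℓ'))) := (hPfull ℓ).dist (hPfull ℓ')
    have t2 : Filter.Tendsto (fun k => dist (vc k ℓ) (vc k ℓ')) Filter.atTop
        (nhds (dist (Q ℓ) (Q ℓ'))) :=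
      (((hQfull ℓ).dist (hQfull ℓ')).congr' hev.symm)
    exact tendsto_nhds_unique t1 t2
  -- identification of the fixed coordinates
  have hconst : ∀ (ℓ : ℕ) (z : X) (k0 : ℕ), (∀ k, k0 ≤ k → vc k ℓ = z) → P ℓ = z := by
    intro ℓ z k0 hz
    refine tendsto_nhds_unique (hPfull ℓ) (Filter.Tendsto.congr' ?_ tendsto_const_nhds)
    rw [Filter.eventuallyEq_iff_exists_mem]
    exact ⟨Set.Ici k0, Filter.Ici_mem_atTop _, fun k hk => (hz k hk).symm⟩
  have hconstQ : ∀ (ℓ : ℕ) (z : X) (k0 : ℕ), (∀ k, k0 ≤ k → vd k ℓ = z) → Q ℓ = z := by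
    intro ℓ z k0 hz
    refine tendsto_nhds_unique (hQfull ℓ) (Filter.Tendsto.congr' ?_ tendsto_const_nhds)
    rw [Filter.eventuallyEq_iff_exists_mem]
    exact ⟨Set.Ici k0, Filter.Ici_mem_atTop _, fun k hk => (hz k hk).symm⟩
  have hPa : ∀ i : Fin n, P i.1 = a i := by
    intro i
    apply hconst i.1 (a i) 0
    intro k hk
    have hi : (i.1 : ℕ) < n + k := by omega
    rw [hvc_eq k i.1 hi]
    have : (⟨i.1, hi⟩ : Fin (n+k)) = Fin.castLE (Nat.le_add_right n k) i := rfl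
    rw [this]
    exact ((C k).fixa (γsel k) (hγsel k) i).1
  have hQb : ∀ i : Fin n, Q i.1 = b i := by
    intro i
    apply hconstQ i.1 (b i) 0
    intro k hk
    have hi : (i.1 : ℕ) < n + k := by omega
    rw [hvd_eq k i.1 hi]
    have : (⟨i.1, hi⟩ : Fin (n+k)) = Fin.castLE (Nat.le_add_right n k) i := rfl
    rw [this]
    exact ((C k).fixa (γsel k) (hγsel k) i).2
  have hPu : ∀ t : ℕ, P (n + 2*t) = u t := by
    intro t
    apply hconst (n + 2*t) (u t) (2*t + 1)
    intro k hk
    have hi : n + 2*t < n + k := by omega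
    rw [hvc_eq k (n + 2*t) hi]
    have := (C k).fixc (γsel k) (hγsel k) (2*t) (by omega) (by omega)
    rw [this]
    congr 1
    omega
  have hQu : ∀ t : ℕ, Q (n + 2*t + 1) = u t := by
    intro t
    apply hconstQ (n + 2*t + 1) (u t) (2*t + 2)
    intro k hk
    have hi : n + (2*t + 1) < n + k := by omega
    have hre : n + 2*t + 1 = n + (2*t+1) := by omega
    rw [hre, hvd_eq k (n + (2*t+1)) hi]
    have := (C k).fixd (γsel k) (hγsel k) (2*t+1) (by omega) (by omega)
    rw [this]
    congr 1
    omega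
  -- dense ranges
  have hPd : DenseRange P := by
    apply Dense.mono _ hu
    intro x hx
    obtain ⟨t, rfl⟩ := hx
    exact ⟨n + 2*t, hPu t⟩
  have hQd : DenseRange Q := by
    apply Dense.mono _ hu
    intro x hx
    obtain ⟨t, rfl⟩ := hx
    exact ⟨n + 2*t + 1, hQu t⟩
  obtain ⟨χ, hχ⟩ := completion P Q hdists hPd hQd
  refine ⟨χ, fun i => ?_⟩
  rw [← hPa i, hχ i.1, hQb i]
end

section
/- A metric space X is ultrahomogeneous (every distance-preserving bijection between two finite subsets extends to a surjective isometry of X) if and only if its Scott rank is 0, i.e., for all equal-length tuples ā, b̄, if ā ≡₀ b̄ (the map ā ↦ b̄ is a partial isometry) then ā ≡_α b̄ for all ordinals α. -/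
section Aux

variable {X : Type} [MetricSpace X]

lemma BF_zero_iff {n} {a b : Fin n → X} :
    BF 0 n a b ↔ ∀ i j, dist (a i) (a j) = dist (b i) (b j) := by
  unfold BF; rw [Ordinal.limitRecOn_zero]

lemma BF_succ_iff {o : Ordinal} {n} {a b : Fin n → X} :
    BF (Order.succ o) n a b ↔
      ((∀ x : X, ∃ y : X, BF o (n + 1) (Fin.snoc a x) (Fin.snoc b y)) ∧
       (∀ y : X, ∃ x : X, BF o (n + 1) (Fin.snoc a x) (Fin.snoc b y))) := by
  unfold BF; rw [Ordinal.limitRecOn_succ]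

lemma BF_limit_iff {o : Ordinal} (ho : Order.IsSuccLimit o) {n} {a b : Fin n → X} :
    BF o n a b ↔ ∀ β < o, BF β n a b := by
  unfold BF; rw [Ordinal.limitRecOn_limit _ _ _ _ ho]

omit [MetricSpace X] in
lemma snoc_comp {n m : ℕ} (f : Fin m → Fin n) (a : Fin n → X) (x : X) :
    Fin.snoc (a ∘ f) x =
      (Fin.snoc a x : Fin (n+1) → X) ∘
        (Fin.snoc (Fin.castSucc ∘ f) (Fin.last n) : Fin (m+1) → Fin (n+1)) := by
  funext i
  refine Fin.lastCases ?_ ?_ i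
  · simp
  · intro j; simp

lemma BF_comp : ∀ (α : Ordinal) {n m : ℕ} (f : Fin m → Fin n) (a b : Fin n → X),
    BF α n a b → BF α m (a ∘ f) (b ∘ f) := by
  intro α
  induction α using Ordinal.limitRecOn with
  | zero =>
      intro n m f a b h
      rw [BF_zero_iff] at *
      intro i j; exact h (f i) (f j)
  | add_one o ih =>
      rw [← Order.succ_eq_add_one]
      intro n m f a b h
      rw [BF_succ_iff] at *
      constructor
      · intro x
        obtain ⟨y, hy⟩ := h.1 x
        exact ⟨y, by rw [snoc_comp f a x, snoc_comp f b y]; exact ih _ _ _ hy⟩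
      · intro y
        obtain ⟨x, hx⟩ := h.2 y
        exact ⟨x, by rw [snoc_comp f a x, snoc_comp f b y]; exact ih _ _ _ hx⟩
  | limit o ho ih =>
      intro n m f a b h
      rw [BF_limit_iff ho] at *
      intro β hβ; exact ih β hβ f a b (h β hβ)

lemma BF_mono [Nonempty X] : ∀ (α β : Ordinal), β ≤ α → ∀ {n} (a b : Fin n → X),
    BF α n a b → BF β n a b := by
  intro α
  induction α using Ordinal.limitRecOn with
  | zero =>
      intro β hβ n a b h
      rwa [nonpos_iff_eq_zero.mp hβ]
  | add_one o ih =>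
      rw [← Order.succ_eq_add_one]
      intro β hβ n a b h
      rcases eq_or_lt_of_le hβ with rfl | hlt
      · exact h
      · apply ih β (Order.lt_succ_iff.mp hlt)
        obtain ⟨x⟩ : Nonempty X := inferInstance
        rw [BF_succ_iff] at h
        obtain ⟨y, hy⟩ := h.1 x
        have hc := BF_comp o (Fin.castSucc : Fin n → Fin (n+1)) _ _ hy
        have e1 : (Fin.snoc a x : Fin (n+1) → X) ∘ Fin.castSucc = a :=
          funext fun i => Fin.snoc_castSucc _ _ _
        have e2 : (Fin.snoc b y : Fin (n+1) → X) ∘ Fin.castSucc = b :=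
          funext fun i => Fin.snoc_castSucc _ _ _
        rwa [e1, e2] at hc
  | limit o ho ih =>
      intro β hβ n a b h
      rcases eq_or_lt_of_le hβ with rfl | hlt
      · exact h
      · exact (BF_limit_iff ho).mp h β hlt

lemma BF_of_ext : ∀ (α : Ordinal) {n} (a b : Fin n → X),
    (∃ χ : X ≃ᵢ X, ∀ i, χ (a i) = b i) → BF α n a b := by
  intro α
  induction α using Ordinal.limitRecOn with
  | zero =>
      rintro n a b ⟨χ, hχ⟩
      rw [BF_zero_iff]
      intro i j
      rw [← hχ i, ← hχ j, χ.dist_eq]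
  | add_one o ih =>
      rw [← Order.succ_eq_add_one]
      rintro n a b ⟨χ, hχ⟩
      rw [BF_succ_iff]
      constructor
      · intro x
        refine ⟨χ x, ih _ _ ⟨χ, ?_⟩⟩
        refine Fin.lastCases ?_ ?_ <;> simp [hχ]
      · intro y
        refine ⟨χ.symm y, ih _ _ ⟨χ, ?_⟩⟩
        refine Fin.lastCases ?_ ?_ <;> simp [hχ]
  | limit o ho ih =>
      rintro n a b h
      rw [BF_limit_iff ho]
      exact fun β hβ => ih β hβ _ _ h

lemma stab {Y : Type} [Countable Y] (P : Y → Ordinal → Prop)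
    (hmono : ∀ y α β, β ≤ α → P y α → P y β)
    (h : ∀ α, ∃ y, P y α) : ∃ y, ∀ α, P y α := by
  by_contra hc
  push_neg at hc
  choose g hg using hc
  obtain ⟨y, hy⟩ := h (Order.succ (⨆ y, g y))
  exact hg y (hmono y _ _ ((Ordinal.le_iSup g y).trans (Order.le_succ _)) hy)

noncomputable def chain (F G : ∀ m : ℕ, (Fin m → X) → (Fin m → X) → X → X) (e : ℕ → X)
    {n : ℕ} (a b : Fin n → X) : ∀ k : ℕ, (Fin (n + k) → X) × (Fin (n + k) → X)
  | 0 => (a, b)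
  | (k+1) =>
      let p := chain F G e a b k
      if k % 2 = 0 then
        (Fin.snoc p.1 (e (k / 2)), Fin.snoc p.2 (F (n + k) p.1 p.2 (e (k / 2))))
      else
        (Fin.snoc p.1 (G (n + k) p.1 p.2 (e (k / 2))), Fin.snoc p.2 (e (k / 2)))

omit [MetricSpace X] in
lemma chain_succ_exists (F G : ∀ m : ℕ, (Fin m → X) → (Fin m → X) → X → X) (e : ℕ → X)
    {n : ℕ} (a b : Fin n → X) (k : ℕ) :
    ∃ x y, chain F G e a b (k+1) =
      (Fin.snoc (chain F G e a b k).1 x, Fin.snoc (chain F G e a b k).2 y) := by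
  by_cases h : k % 2 = 0
  · exact ⟨e (k/2), F (n+k) (chain F G e a b k).1 (chain F G e a b k).2 (e (k/2)),
      by simp [chain, h]⟩
  · exact ⟨G (n+k) (chain F G e a b k).1 (chain F G e a b k).2 (e (k/2)), e (k/2),
      by simp [chain, h]⟩

omit [MetricSpace X] in
lemma chain_coh (F G : ∀ m : ℕ, (Fin m → X) → (Fin m → X) → X → X) (e : ℕ → X)
    {n : ℕ} (a b : Fin n → X) :
    ∀ k k', k ≤ k' → ∀ (i : ℕ) (hi : i < n + k) (hi' : i < n + k'),
      (chain F G e a b k').1 ⟨i, hi'⟩ = (chain F G e a b k).1 ⟨i, hi⟩ ∧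
      (chain F G e a b k').2 ⟨i, hi'⟩ = (chain F G e a b k).2 ⟨i, hi⟩ := by
  intro k k' hk
  induction k', hk using Nat.le_induction with
  | base => intro i hi hi'; exact ⟨rfl, rfl⟩
  | succ k' hk ih =>
      intro i hi hi'
      have hi'' : i < n + k' := by omega
      obtain ⟨x, y, hxy⟩ := chain_succ_exists F G e a b k'
      have hcast : (⟨i, hi'⟩ : Fin (n + (k'+1))) = Fin.castSucc ⟨i, hi''⟩ := rfl
      have h1 : (chain F G e a b (k'+1)).1 = Fin.snoc (chain F G e a b k').1 x := by
        rw [hxy]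
      have h2 : (chain F G e a b (k'+1)).2 = Fin.snoc (chain F G e a b k').2 y := by
        rw [hxy]
      constructor
      · rw [h1, hcast, Fin.snoc_castSucc]
        exact (ih i hi hi'').1
      · rw [h2, hcast, Fin.snoc_castSucc]
        exact (ih i hi hi'').2

universe u in
lemma chain_spec {F G : ∀ m : ℕ, (Fin m → X) → (Fin m → X) → X → X} {e : ℕ → X}
    {n : ℕ} {a b : Fin n → X}
    (hab : ∀ α : Ordinal.{u}, BF α n a b)
    (hF : ∀ m (u v : Fin m → X) (x : X), (∀ α : Ordinal.{u}, BF α m u v) →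
      ∀ α : Ordinal.{u}, BF α (m+1) (Fin.snoc u x) (Fin.snoc v (F m u v x)))
    (hG : ∀ m (u v : Fin m → X) (y : X), (∀ α : Ordinal.{u}, BF α m u v) →
      ∀ α : Ordinal.{u}, BF α (m+1) (Fin.snoc u (G m u v y)) (Fin.snoc v y)) :
    ∀ (k : ℕ) (α : Ordinal.{u}), BF α (n + k) (chain F G e a b k).1 (chain F G e a b k).2 := by
  intro k
  induction k with
  | zero => exact hab
  | succ k ih =>
      by_cases h : k % 2 = 0
      · intro α
        have := hF (n+k) (chain F G e a b k).1 (chain F G e a b k).2 (e (k/2)) ih α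
        have h1 : (chain F G e a b (k+1)).1
            = Fin.snoc (chain F G e a b k).1 (e (k/2)) := by simp [chain, h]
        have h2 : (chain F G e a b (k+1)).2
            = Fin.snoc (chain F G e a b k).2
                (F (n+k) (chain F G e a b k).1 (chain F G e a b k).2 (e (k/2))) := by
          simp [chain, h]
        rw [h1, h2]; exact this
      · intro α
        have := hG (n+k) (chain F G e a b k).1 (chain F G e a b k).2 (e (k/2)) ih α
        have h1 : (chain F G e a b (k+1)).1
            = Fin.snoc (chain F G e a b k).1
                (G (n+k) (chain F G e a b k).1 (chain F G e a b k).2 (e (k/2))) := by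
          simp [chain, h]
        have h2 : (chain F G e a b (k+1)).2
            = Fin.snoc (chain F G e a b k).2 (e (k/2)) := by simp [chain, h]
        rw [h1, h2]; exact this

end Aux

/-- A countable metric space `X` is ultrahomogeneous (every distance-preserving
correspondence between finite tuples extends to a surjective isometry of `X`) iff its
Scott rank is `0`, i.e. for all equal-length tuples, `ā ≡₀ b̄` (the map `ā ↦ b̄` is a
partial isometry) implies `ā ≡_α b̄` for all ordinals `α`. -/
theorem ultrahomogeneous_iff_scott_rank_zero {X : Type} [MetricSpace X] [Countable X] :
    (∀ (n : ℕ) (a b : Fin n → X),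
        (∀ i j, dist (a i) (a j) = dist (b i) (b j)) →
        ∃ χ : X ≃ᵢ X, ∀ i, χ (a i) = b i) ↔
    (∀ (n : ℕ) (a b : Fin n → X), BF 0 n a b → ∀ α : Ordinal, BF α n a b) := by
  constructor
  · intro H n a b h0 α
    exact BF_of_ext α a b (H n a b (BF_zero_iff.mp h0))
  · intro H n a b hdist
    rcases isEmpty_or_nonempty X with hE | hN
    · exact ⟨IsometryEquiv.refl X, fun i => (IsEmpty.false (a i)).elim⟩
    obtain ⟨e, he⟩ := exists_surjective_nat X
    have hRel : ∀ α, BF α n a b := H n a b (BF_zero_iff.mpr hdist)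
    -- extension functions via stabilization
    have forth : ∀ (m : ℕ) (u v : Fin m → X) (x : X), ∃ y : X, (∀ α, BF α m u v) →
        ∀ α, BF α (m+1) (Fin.snoc u x) (Fin.snoc v y) := by
      intro m u v x
      by_cases hr : ∀ α, BF α m u v
      · obtain ⟨y, hy⟩ := stab (fun y α => BF α (m+1) (Fin.snoc u x) (Fin.snoc v y))
          (fun y α β hβ => BF_mono α β hβ _ _)
          (fun α => (BF_succ_iff.mp (hr (Order.succ α))).1 x)
        exact ⟨y, fun _ => hy⟩
      · exact ⟨e 0, fun hr' => absurd hr' hr⟩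
    have back : ∀ (m : ℕ) (u v : Fin m → X) (y : X), ∃ x : X, (∀ α, BF α m u v) →
        ∀ α, BF α (m+1) (Fin.snoc u x) (Fin.snoc v y) := by
      intro m u v y
      by_cases hr : ∀ α, BF α m u v
      · obtain ⟨x, hx⟩ := stab (fun x α => BF α (m+1) (Fin.snoc u x) (Fin.snoc v y))
          (fun x α β hβ => BF_mono α β hβ _ _)
          (fun α => (BF_succ_iff.mp (hr (Order.succ α))).2 y)
        exact ⟨x, fun _ => hx⟩
      · exact ⟨e 0, fun hr' => absurd hr' hr⟩
    choose F hF using forth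
    choose G hG using back
    have hspec : ∀ k α, BF α (n + k) (chain F G e a b k).1 (chain F G e a b k).2 :=
      chain_spec hRel hF hG
    have hcoh := chain_coh F G e a b
    -- the two enumerating sequences
    set A : ℕ → X := fun j => (chain F G e a b (j+1)).1 ⟨j, by omega⟩ with hA
    set B : ℕ → X := fun j => (chain F G e a b (j+1)).2 ⟨j, by omega⟩ with hB
    have hAeq : ∀ (j k : ℕ) (hjk : j < n + k), j + 1 ≤ k →
        (chain F G e a b k).1 ⟨j, hjk⟩ = A j := by
      intro j k hjk hk
      exact (hcoh (j+1) k hk j (by omega) hjk).1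
    have hBeq : ∀ (j k : ℕ) (hjk : j < n + k), j + 1 ≤ k →
        (chain F G e a b k).2 ⟨j, hjk⟩ = B j := by
      intro j k hjk hk
      exact (hcoh (j+1) k hk j (by omega) hjk).2
    have distAB : ∀ i j : ℕ, dist (A i) (A j) = dist (B i) (B j) := by
      intro i j
      set k := max i j + 1 with hk
      have hik : i < n + k := by omega
      have hjk : j < n + k := by omega
      have h0 := BF_zero_iff.mp (hspec k 0) ⟨i, hik⟩ ⟨j, hjk⟩
      rwa [hAeq i k hik (by omega), hAeq j k hjk (by omega),
        hBeq i k hik (by omega), hBeq j k hjk (by omega)] at h0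
    have hAsurj : ∀ x : X, ∃ j : ℕ, A j = x := by
      intro x
      obtain ⟨m, rfl⟩ := he x
      refine ⟨n + 2*m, ?_⟩
      have h1 : A (n + 2*m) = (chain F G e a b (2*m+1)).1 ⟨n + 2*m, by omega⟩ :=
        (hcoh (2*m+1) (n+2*m+1) (by omega) (n+2*m) (by omega) (by omega)).1
      rw [h1]
      have hpar : (2*m) % 2 = 0 := by omega
      have hdiv : (2*m) / 2 = m := by omega
      have h2 : (chain F G e a b (2*m+1)).1
          = Fin.snoc (chain F G e a b (2*m)).1 (e m) := by
        simp [chain, hpar, hdiv]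
      rw [h2]
      exact Fin.snoc_last _ _
    have hBsurj : ∀ y : X, ∃ j : ℕ, B j = y := by
      intro y
      obtain ⟨m, rfl⟩ := he y
      refine ⟨n + (2*m+1), ?_⟩
      have h1 : B (n + (2*m+1)) = (chain F G e a b (2*m+2)).2 ⟨n + (2*m+1), by omega⟩ :=
        (hcoh (2*m+2) (n+(2*m+1)+1) (by omega) (n+(2*m+1)) (by omega) (by omega)).2
      rw [h1]
      have hpar : ¬ (2*m+1) % 2 = 0 := by omega
      have hdiv : (2*m+1) / 2 = m := by omega
      have h2 : (chain F G e a b (2*m+2)).2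
          = Fin.snoc (chain F G e a b (2*m+1)).2 (e m) := by
        simp [chain, hpar, hdiv]
      rw [h2]
      exact Fin.snoc_last _ _
    have hABfun : ∀ i j : ℕ, A i = A j → B i = B j := by
      intro i j hij
      have hd := distAB i j
      rw [hij, dist_self] at hd
      exact dist_eq_zero.mp hd.symm
    choose σ hσ using hAsurj
    have hφA : ∀ i, B (σ (A i)) = B i := fun i => hABfun _ _ (hσ (A i))
    have hiso : Isometry (fun x => B (σ x)) := by
      apply Isometry.of_dist_eq
      intro x y
      calc dist (B (σ x)) (B (σ y)) = dist (A (σ x)) (A (σ y)) := (distAB _ _).symm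
      _ = dist x y := by rw [hσ, hσ]
    have hsurj : Function.Surjective (fun x => B (σ x)) := by
      intro y
      obtain ⟨j, hj⟩ := hBsurj y
      exact ⟨A j, by simpa [hφA j] using hj⟩
    refine ⟨⟨Equiv.ofBijective _ ⟨hiso.injective, hsurj⟩, hiso⟩, ?_⟩
    intro i
    show B (σ (a i)) = b i
    have ha : A i.val = a i := by
      have h := (hcoh 0 (i.val+1) (by omega) i.val i.isLt (by omega)).1
      exact h
    have hb : B i.val = b i := by
      have h := (hcoh 0 (i.val+1) (by omega) i.val i.isLt (by omega)).2
      exact h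
    rw [← ha, hφA, hb]
end
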